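/- arXiv:2311.01436 — 7 statements merged into one kernel-verified Lean document; each statement's English description precedes it below -/
import Mathlib

section
/- If T is Kreiss bounded on a Banach space X with constant K, then ‖T^n‖ ≤ K·e·(n+1) for all n ∈ ℕ. -/
open Metric Real
open scoped NNReal

/-- If `T` is Kreiss bounded on a complex Banach space `X` with constant `K`, then
`‖T^n‖ ≤ K·e·(n+1)` for all `n : ℕ`. -/
theorem kreiss_bounded_growth
    {X : Type*} [NormedAddCommGroup X] [NormedSpace ℂ X] [CompleteSpace X]
    (T : X →L[ℂ] X) (K : ℝ)
    (hT : ∀ lam : ℂ, 1 < ‖lam‖ →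
      IsUnit (lam • (1 : X →L[ℂ] X) - T) ∧
      ‖Ring.inverse (lam • (1 : X →L[ℂ] X) - T)‖ ≤ K / (‖lam‖ - 1)) :
    ∀ n : ℕ, ‖T ^ n‖ ≤ K * Real.exp 1 * (n + 1) := by
  have hK0 : 0 ≤ K := by
    have h2 := (hT 2 (by norm_num)).2
    have h0 : (0:ℝ) ≤ ‖Ring.inverse ((2:ℂ) • (1 : X →L[ℂ] X) - T)‖ := norm_nonneg _
    have hn2 : ‖(2:ℂ)‖ = 2 := by norm_num
    rw [hn2] at h2
    norm_num at h2
    linarith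
  set g : ℂ → (X →L[ℂ] X) := fun z : ℂ => Ring.inverse (1 - z • T) with hg
  -- key norm bound on the resolvent-type function
  have key : ∀ z : ℂ, z ≠ 0 → ‖z‖ < 1 →
      IsUnit ((1 : X →L[ℂ] X) - z • T) ∧ ‖g z‖ ≤ K / (1 - ‖z‖) := by
    intro z hz hz1
    have hzn : 0 < ‖z‖ := norm_pos_iff.mpr hz
    have hlam : 1 < ‖z⁻¹‖ := by
      rw [norm_inv]; exact (one_lt_inv₀ hzn).mpr hz1
    obtain ⟨hu, hb⟩ := hT z⁻¹ hlam
    obtain ⟨v, hv⟩ := hu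
    have hid : (1 : X →L[ℂ] X) - z • T = z • (v : X →L[ℂ] X) := by
      rw [hv, smul_sub, smul_smul, mul_inv_cancel₀ hz, one_smul]
    have hmul1 : (z • (v : X →L[ℂ] X)) * (z⁻¹ • ((v⁻¹ : (X →L[ℂ] X)ˣ) : X →L[ℂ] X)) = 1 := by
      rw [smul_mul_assoc, mul_smul_comm, smul_smul, mul_inv_cancel₀ hz, one_smul,
        Units.mul_inv]
    have hmul2 : (z⁻¹ • ((v⁻¹ : (X →L[ℂ] X)ˣ) : X →L[ℂ] X)) * (z • (v : X →L[ℂ] X)) = 1 := by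
      rw [smul_mul_assoc, mul_smul_comm, smul_smul, inv_mul_cancel₀ hz, one_smul,
        Units.inv_mul]
    set U : (X →L[ℂ] X)ˣ := ⟨z • (v : X →L[ℂ] X),
      z⁻¹ • ((v⁻¹ : (X →L[ℂ] X)ˣ) : X →L[ℂ] X), hmul1, hmul2⟩ with hU
    have hUnit : IsUnit ((1 : X →L[ℂ] X) - z • T) := ⟨U, hid.symm⟩
    refine ⟨hUnit, ?_⟩
    have hginv : g z = z⁻¹ • ((v⁻¹ : (X →L[ℂ] X)ˣ) : X →L[ℂ] X) := by
      have h1 : g z = Ring.inverse ((U : X →L[ℂ] X)) := by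
        show Ring.inverse ((1 : X →L[ℂ] X) - z • T) = _
        rw [hid]
      rw [h1, Ring.inverse_unit]
      rfl
    have hvinv : ((v⁻¹ : (X →L[ℂ] X)ˣ) : X →L[ℂ] X) =
        Ring.inverse (z⁻¹ • (1 : X →L[ℂ] X) - T) := by
      rw [← hv, Ring.inverse_unit]
    have hnorm : ‖g z‖ = ‖z‖⁻¹ * ‖Ring.inverse (z⁻¹ • (1 : X →L[ℂ] X) - T)‖ := by
      rw [hginv, hvinv, show ‖z‖⁻¹ = ‖z⁻¹‖ from (norm_inv z).symm]
      exact norm_smul (z⁻¹) (Ring.inverse (z⁻¹ • (1 : X →L[ℂ] X) - T))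
    rw [hnorm]
    have hb' : ‖Ring.inverse (z⁻¹ • (1 : X →L[ℂ] X) - T)‖ ≤ K / (‖z‖⁻¹ - 1) := by
      rwa [norm_inv] at hb
    have hpos : 0 < ‖z‖⁻¹ - 1 := by
      rw [sub_pos]; rwa [norm_inv] at hlam
    have heq : ‖z‖⁻¹ * (K / (‖z‖⁻¹ - 1)) = K / (1 - ‖z‖) := by
      have h2 : ‖z‖⁻¹ - 1 = (1 - ‖z‖) / ‖z‖ := by
        rw [sub_div, div_self hzn.ne', one_div]
      rw [h2, div_div_eq_mul_div, mul_comm K ‖z‖, mul_div_assoc, ← mul_assoc,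
        inv_mul_cancel₀ hzn.ne', one_mul]
    calc ‖z‖⁻¹ * ‖Ring.inverse (z⁻¹ • (1 : X →L[ℂ] X) - T)‖
          ≤ ‖z‖⁻¹ * (K / (‖z‖⁻¹ - 1)) := by
            apply mul_le_mul_of_nonneg_left hb' (by positivity)
        _ = K / (1 - ‖z‖) := heq
  -- differentiability
  have hdiffAt : ∀ z : ℂ, ‖z‖ < 1 → DifferentiableAt ℂ g z := by
    intro z hz1
    have hu : IsUnit ((1 : X →L[ℂ] X) - z • T) := by
      rcases eq_or_ne z 0 with rfl | hz0
      · simp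
      · exact (key z hz0 hz1).1
    have h1 : DifferentiableAt ℂ (fun w : ℂ => (1 : X →L[ℂ] X) - w • T) z :=
      ((differentiableAt_id.smul_const T).const_sub 1)
    have h2 : DifferentiableAt ℂ (Ring.inverse : (X →L[ℂ] X) → (X →L[ℂ] X))
        ((1 : X →L[ℂ] X) - z • T) :=
      differentiableAt_inverse (𝕜 := ℂ) hu
    exact h2.comp z h1
  intro n
  set r : ℝ≥0 := ((n : ℝ≥0) + 1) / ((n : ℝ≥0) + 2) with hrdef
  have hrval : (r : ℝ) = ((n : ℝ) + 1) / ((n : ℝ) + 2) := by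
    push_cast [hrdef]
    norm_num
  have hr0 : 0 < (r : ℝ) := by rw [hrval]; positivity
  have hr1 : (r : ℝ) < 1 := by
    rw [hrval, div_lt_one (by positivity)]
    linarith
  have hdiff : DifferentiableOn ℂ g (closedBall (0:ℂ) r) := by
    intro z hz
    exact (hdiffAt z (lt_of_le_of_lt (mem_closedBall_zero_iff.mp hz) hr1)).differentiableWithinAt
  have H₁ : HasFPowerSeriesOnBall g (cauchyPowerSeries g 0 r) 0 r :=
    hdiff.hasFPowerSeriesOnBall (by exact_mod_cast hr0)
  have H₂ := spectrum.hasFPowerSeriesOnBall_inverse_one_sub_smul ℂ T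
  have heqp : (fun k => ContinuousMultilinearMap.mkPiRing ℂ (Fin k) (T ^ k)) =
      cauchyPowerSeries g 0 r :=
    H₂.hasFPowerSeriesAt.eq_formalMultilinearSeries H₁.hasFPowerSeriesAt
  have hTn : ‖T ^ n‖ = ‖cauchyPowerSeries g 0 r n‖ := by
    rw [← congrFun heqp n, ContinuousMultilinearMap.norm_mkPiRing]
  -- bound on the circle
  have hcirc : ∀ θ : ℝ, ‖g (circleMap 0 (r : ℝ) θ)‖ ≤ K / (1 - (r : ℝ)) := by
    intro θ
    have hznorm : ‖circleMap 0 (r : ℝ) θ‖ = (r : ℝ) := by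
      simp [norm_circleMap_zero, abs_of_pos hr0]
    have hzne : circleMap 0 (r : ℝ) θ ≠ 0 := by
      intro h
      rw [h] at hznorm
      simp at hznorm
      exact hr0.ne' hznorm.symm
    have := (key _ hzne (by rw [hznorm]; exact hr1)).2
    rwa [hznorm] at this
  have hcont : Continuous fun θ : ℝ => ‖g (circleMap 0 (r : ℝ) θ)‖ := by
    apply Continuous.norm
    rw [continuous_iff_continuousAt]
    intro θ
    have hz1 : ‖circleMap 0 (r : ℝ) θ‖ < 1 := by
      simp [norm_circleMap_zero, abs_of_pos hr0, hr1]
    exact (hdiffAt _ hz1).continuousAt.comp (continuous_circleMap 0 (r:ℝ)).continuousAt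
  have hCpos : 0 ≤ K / (1 - (r : ℝ)) := by
    apply div_nonneg hK0
    linarith
  have hint : (∫ θ in (0:ℝ)..2 * π, ‖g (circleMap 0 (r : ℝ) θ)‖) ≤
      2 * π * (K / (1 - (r : ℝ))) := by
    have h : (∫ θ in (0:ℝ)..2 * π, ‖g (circleMap 0 (r : ℝ) θ)‖) ≤
        ∫ _θ in (0:ℝ)..2 * π, (K / (1 - (r : ℝ))) :=
      intervalIntegral.integral_mono_on (by positivity : (0:ℝ) ≤ 2 * π)
        (hcont.intervalIntegrable 0 (2 * π)) intervalIntegrable_const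
        (fun θ _ => hcirc θ)
    rw [intervalIntegral.integral_const, smul_eq_mul] at h
    calc (∫ θ in (0:ℝ)..2 * π, ‖g (circleMap 0 (r : ℝ) θ)‖)
        ≤ (2 * π - 0) * (K / (1 - (r : ℝ))) := h
      _ = 2 * π * (K / (1 - (r : ℝ))) := by ring
  have hbound := norm_cauchyPowerSeries_le g 0 (r : ℝ) n
  have habs : |(r : ℝ)| = (r : ℝ) := abs_of_pos hr0
  have hstep : ‖T ^ n‖ ≤ (K / (1 - (r : ℝ))) * ((r : ℝ)⁻¹) ^ n := by
    rw [hTn]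
    refine hbound.trans ?_
    rw [habs]
    apply mul_le_mul_of_nonneg_right _ (by positivity)
    have h2pi : (0:ℝ) < (2 * π)⁻¹ := by positivity
    calc (2 * π)⁻¹ * ∫ θ : ℝ in (0)..2 * π, ‖g (circleMap 0 (r:ℝ) θ)‖
        ≤ (2 * π)⁻¹ * (2 * π * (K / (1 - (r : ℝ)))) :=
          mul_le_mul_of_nonneg_left hint h2pi.le
      _ = K / (1 - (r : ℝ)) := by
          rw [← mul_assoc, inv_mul_cancel₀ (by positivity : (2 * π : ℝ) ≠ 0), one_mul]
  -- arithmetic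
  have h1r : 1 - (r : ℝ) = 1 / ((n : ℝ) + 2) := by
    rw [hrval]
    field_simp
    norm_num
  have hrinv : (r : ℝ)⁻¹ = ((n : ℝ) + 2) / ((n : ℝ) + 1) := by
    rw [hrval]
    rw [inv_div]
  have hfinal : (K / (1 - (r : ℝ))) * ((r : ℝ)⁻¹) ^ n ≤ K * Real.exp 1 * (n + 1) := by
    rw [h1r, hrinv, div_div_eq_mul_div, div_one]
    set m : ℝ := (n : ℝ) with hm
    have hm0 : 0 ≤ m := Nat.cast_nonneg n
    have hq : (0:ℝ) ≤ (m + 2) / (m + 1) := by positivity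
    have h1 : (m + 2) / (m + 1) ≤ Real.exp (1 / (m + 1)) := by
      have := Real.add_one_le_exp (1 / (m + 1))
      have heq2 : (m + 2) / (m + 1) = 1 / (m + 1) + 1 := by
        field_simp
        ring
      linarith [heq2 ▸ this]
    have h2 : ((m + 2) / (m + 1)) ^ (n + 1) ≤ Real.exp (1 / (m + 1)) ^ (n + 1) :=
      pow_le_pow_left₀ hq h1 (n + 1)
    have h3 : Real.exp (1 / (m + 1)) ^ (n + 1) = Real.exp 1 := by
      rw [← Real.exp_nat_mul]
      congr 1
      push_cast [hm]
      field_simp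
    have h4 : (m + 2) * ((m + 2) / (m + 1)) ^ n = (m + 1) * ((m + 2) / (m + 1)) ^ (n + 1) := by
      rw [pow_succ]
      field_simp
    calc K * (m + 2) * ((m + 2) / (m + 1)) ^ n
        = K * ((m + 2) * ((m + 2) / (m + 1)) ^ n) := by ring
      _ = K * ((m + 1) * ((m + 2) / (m + 1)) ^ (n + 1)) := by rw [h4]
      _ ≤ K * ((m + 1) * Real.exp 1) := by
          apply mul_le_mul_of_nonneg_left _ hK0
          apply mul_le_mul_of_nonneg_left (h2.trans h3.le) (by linarith)
      _ = K * Real.exp 1 * (m + 1) := by ring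
  exact hstep.trans hfinal
end

section
/- If T is strongly Kreiss bounded on a Banach space X with constant K_s (i.e., ‖(λ-T)^{-n}‖ ≤ K_s/(|λ|-1)^n for all |λ|>1 and n ∈ ℕ), then ‖e^{ξT}‖ ≤ K_s e^{|ξ|} for all ξ ∈ ℂ. -/
open Filter NormedSpace
open scoped Nat

section aux
variable {A : Type*} [NormedRing A] [NormedAlgebra ℂ A] [CompleteSpace A]

lemma aux_pow_norm (h1 : ‖(1:A)‖ ≤ 1) (a : A) : ∀ n : ℕ, ‖a ^ n‖ ≤ ‖a‖ ^ n := by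
  intro n
  cases n with
  | zero => simpa using h1
  | succ n => exact norm_pow_le' a n.succ_pos

lemma aux_norm_exp_le (h1 : ‖(1:A)‖ ≤ 1) (a : A) : ‖exp a‖ ≤ Real.exp ‖a‖ := by
  rw [exp_eq_tsum ℂ]
  refine (norm_tsum_le_tsum_norm (norm_expSeries_summable' a)).trans ?_
  have hsum2 : Summable (fun n : ℕ => ‖a‖ ^ n / n !) := Real.summable_pow_div_factorial ‖a‖
  have hterm : ∀ n : ℕ, ‖(n !⁻¹ : ℂ) • a ^ n‖ ≤ ‖a‖ ^ n / n ! := by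
    intro n
    rw [norm_smul, norm_inv, Complex.norm_natCast, div_eq_mul_inv, mul_comm (‖a‖ ^ n)]
    exact mul_le_mul_of_nonneg_left (aux_pow_norm h1 a n) (by positivity)
  refine (Summable.tsum_le_tsum hterm (norm_expSeries_summable' a) hsum2).trans ?_
  rw [Real.exp_eq_exp_ℝ, exp_eq_tsum_div]

lemma aux_pow_sub_pow (x y : A) (M : ℝ) (hx : ‖x‖ ≤ M) (hy : ‖y‖ ≤ M) :
    ∀ n : ℕ, ‖x ^ n - y ^ n‖ ≤ n * M ^ (n - 1) * ‖x - y‖ := by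
  have hM : (0:ℝ) ≤ M := le_trans (norm_nonneg x) hx
  intro n
  induction n with
  | zero => simp
  | succ n ih =>
    rcases Nat.eq_zero_or_pos n with hn | hn
    · subst hn; simp
    have key : x ^ (n+1) - y ^ (n+1) = x ^ n * (x - y) + (x ^ n - y ^ n) * y := by
      rw [pow_succ, pow_succ]; noncomm_ring
    have h1 : ‖x ^ n * (x - y)‖ ≤ M ^ n * ‖x - y‖ := by
      refine (norm_mul_le _ _).trans ?_
      gcongr
      exact (norm_pow_le' x hn).trans (pow_le_pow_left₀ (norm_nonneg x) hx n)
    have h2 : ‖(x ^ n - y ^ n) * y‖ ≤ (n * M ^ (n-1) * ‖x - y‖) * M := by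
      refine (norm_mul_le _ _).trans ?_
      exact mul_le_mul ih hy (norm_nonneg y) (by positivity)
    have hMn : M ^ (n - 1) * M = M ^ n := by
      rw [← pow_succ, Nat.sub_add_cancel hn]
    calc ‖x ^ (n+1) - y ^ (n+1)‖ ≤ M ^ n * ‖x - y‖ + n * M ^ (n-1) * ‖x - y‖ * M := by
          rw [key]; exact (norm_add_le _ _).trans (add_le_add h1 h2)
      _ = (n + 1) * M ^ n * ‖x - y‖ := by
          rw [show (n:ℝ) * M ^ (n-1) * ‖x - y‖ * M = (n:ℝ) * (M ^ (n-1) * M) * ‖x - y‖ by ring,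
            hMn]; push_cast; ring
      _ = (↑(n+1)) * M ^ (n + 1 - 1) * ‖x - y‖ := by push_cast; simp

lemma aux_inv_norm (h1 : ‖(1:A)‖ ≤ 1) (a : A) (h : ‖a‖ < 1) :
    ‖Ring.inverse (1 - a)‖ ≤ (1 - ‖a‖)⁻¹ := by
  rw [← geom_series_eq_inverse a h]
  have hs : Summable (fun n : ℕ => ‖a ^ n‖) :=
    Summable.of_nonneg_of_le (fun n => norm_nonneg _) (aux_pow_norm h1 a)
      (summable_geometric_of_lt_one (norm_nonneg a) h)
  refine (norm_tsum_le_tsum_norm hs).trans ?_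
  refine (Summable.tsum_le_tsum (aux_pow_norm h1 a) hs
    (summable_geometric_of_lt_one (norm_nonneg a) h)).trans ?_
  rw [tsum_geometric_of_lt_one (norm_nonneg a) h]

lemma aux_exp_sub_inv (h1 : ‖(1:A)‖ ≤ 1) (a : A) (h : ‖a‖ < 1) :
    ‖exp a - Ring.inverse (1 - a)‖ ≤ ‖a‖ ^ 2 * (1 - ‖a‖)⁻¹ := by
  set f : ℕ → A := fun k => (k !⁻¹ : ℂ) • a ^ k - a ^ k with hf
  have hgeom : Summable (fun k : ℕ => a ^ k) := summable_geometric_of_norm_lt_one h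
  have hsum : Summable f := (expSeries_summable' a).sub hgeom
  have heq : exp a - Ring.inverse (1 - a) = ∑' k, f k := by
    rw [exp_eq_tsum ℂ, ← geom_series_eq_inverse a h,
      Summable.tsum_sub (expSeries_summable' a) hgeom]
  have hf0 : f 0 = 0 := by simp [hf]
  have hf1 : f 1 = 0 := by simp [hf]
  have hsum1 : Summable (fun k => f (k + 1)) := (summable_nat_add_iff 1).2 hsum
  have hsum2 : Summable (fun k => f (k + 2)) := (summable_nat_add_iff 2).2 hsum
  have heq2 : ∑' k, f k = ∑' k, f (k + 2) := by
    rw [Summable.tsum_eq_zero_add hsum, hf0, zero_add, Summable.tsum_eq_zero_add hsum1, hf1, zero_add]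
  have hterm : ∀ k : ℕ, ‖f (k + 2)‖ ≤ ‖a‖ ^ (k + 2) := by
    intro k
    have : f (k + 2) = (((k+2)!⁻¹ : ℂ) - 1) • a ^ (k + 2) := by
      rw [hf]; rw [sub_smul, one_smul]
    rw [this, norm_smul]
    have hc : ‖(((k+2)!⁻¹ : ℂ) - 1)‖ ≤ 1 := by
      have hcast : (((k+2)!⁻¹ : ℂ)) - 1 = ((((k+2)! : ℝ)⁻¹ - 1 : ℝ) : ℂ) := by push_cast; ring
      rw [hcast, Complex.norm_real, Real.norm_eq_abs, abs_le]
      constructor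
      · have : (0:ℝ) < ((k+2)! : ℝ)⁻¹ := by positivity
        linarith
      · have h1' : ((k+2)! : ℝ)⁻¹ ≤ 1 := by
          rw [inv_le_one_iff₀]; right; exact_mod_cast Nat.one_le_iff_ne_zero.2 (k+2).factorial_ne_zero
        linarith
    calc ‖(((k+2)!⁻¹ : ℂ) - 1)‖ * ‖a ^ (k+2)‖ ≤ 1 * ‖a‖ ^ (k+2) :=
          mul_le_mul hc (norm_pow_le' a (by omega)) (norm_nonneg _) zero_le_one
      _ = ‖a‖ ^ (k+2) := one_mul _
  have hbsum : Summable (fun k : ℕ => ‖a‖ ^ (k + 2)) := by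
    simp_rw [pow_add]
    exact (summable_geometric_of_lt_one (norm_nonneg a) h).mul_right _
  have hnsum : Summable (fun k : ℕ => ‖f (k + 2)‖) :=
    Summable.of_nonneg_of_le (fun k => norm_nonneg _) hterm hbsum
  rw [heq, heq2]
  refine (norm_tsum_le_tsum_norm hnsum).trans ?_
  refine (Summable.tsum_le_tsum hterm hnsum hbsum).trans ?_
  have : ∑' k : ℕ, ‖a‖ ^ (k + 2) = ‖a‖ ^ 2 * (1 - ‖a‖)⁻¹ := by
    simp_rw [pow_add]
    rw [tsum_mul_right, tsum_geometric_of_lt_one (norm_nonneg a) h]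
    ring
  rw [this]

lemma aux_inverse_smul (c : ℂ) (hc : c ≠ 0) (u : Aˣ) :
    Ring.inverse (c • (u : A)) = c⁻¹ • ((↑u⁻¹ : A)) := by
  have V : Aˣ := ⟨c • (u : A), c⁻¹ • ((↑u⁻¹ : A)),
    by rw [smul_mul_smul_comm, mul_inv_cancel₀ hc, u.mul_inv, one_smul],
    by rw [smul_mul_smul_comm, inv_mul_cancel₀ hc, u.inv_mul, one_smul]⟩
  exact Ring.inverse_unit ⟨c • (u : A), c⁻¹ • ((↑u⁻¹ : A)),
    by rw [smul_mul_smul_comm, mul_inv_cancel₀ hc, u.mul_inv, one_smul],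
    by rw [smul_mul_smul_comm, inv_mul_cancel₀ hc, u.inv_mul, one_smul]⟩

lemma aux_ratio (p s Ks : ℝ) (hp : 0 < p) (hs : 0 < s) (hd : p - s ≠ 0) (n : ℕ) :
    (p / s) ^ n * (Ks / ((p / s) - 1) ^ n) = Ks * ((1 - s / p) ^ n)⁻¹ := by
  have h1 : p / s - 1 = (p - s) / s := by field_simp
  have h2 : 1 - s / p = (p - s) / p := by field_simp
  rw [h1, h2]
  rw [div_pow, div_pow, div_pow]
  have hps : (p - s) ^ n ≠ 0 := pow_ne_zero _ hd
  field_simp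

end aux

set_option maxHeartbeats 1000000 in
/-- If `T` is strongly Kreiss bounded on a complex Banach space `X` with constant `Ks`
(`‖(λ - T)⁻ⁿ‖ ≤ Ks/(|λ|-1)^n` for all `|λ| > 1` and `n ≥ 1`), then
`‖e^{ξT}‖ ≤ Ks·e^{|ξ|}` for all `ξ ∈ ℂ`. -/
theorem strongly_kreiss_exp_bound
    {X : Type*} [NormedAddCommGroup X] [NormedSpace ℂ X] [CompleteSpace X]
    (T : X →L[ℂ] X) (Ks : ℝ)
    (hT : ∀ n : ℕ, 1 ≤ n → ∀ lam : ℂ, 1 < ‖lam‖ →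
      IsUnit (lam • (1 : X →L[ℂ] X) - T) ∧
      ‖Ring.inverse (lam • (1 : X →L[ℂ] X) - T) ^ n‖ ≤ Ks / (‖lam‖ - 1) ^ n) :
    ∀ ξ : ℂ, ‖NormedSpace.exp (ξ • T)‖ ≤ Ks * Real.exp ‖ξ‖ := by
  have h1le : ‖(1 : X →L[ℂ] X)‖ ≤ 1 := by
    rw [ContinuousLinearMap.one_def]; exact ContinuousLinearMap.norm_id_le
  have hKs0 : 0 ≤ Ks := by
    obtain ⟨hu, hb⟩ := hT 1 le_rfl 2 (by norm_num)
    have : (0:ℝ) ≤ Ks / (‖(2:ℂ)‖ - 1) ^ 1 := le_trans (norm_nonneg _) hb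
    have h2 : ‖(2:ℂ)‖ = 2 := by norm_num
    rw [h2] at this; norm_num at this; exact this
  intro ξ
  rcases eq_or_ne ξ 0 with hξ0 | hξ0
  · -- ξ = 0 case : need ‖1‖ ≤ Ks
    subst hξ0
    have key : ∀ m : ℕ, 2 ≤ m →
        ‖(1 : X →L[ℂ] X)‖ ≤ ((m:ℝ) + ‖T‖) * (Ks / ((m:ℝ) - 1)) := by
      intro m hm
      have hm2 : (2:ℝ) ≤ (m:ℝ) := by exact_mod_cast hm
      have hnorm : (1:ℝ) < ‖((m:ℂ))‖ := by
        rw [Complex.norm_natCast]; linarith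
      obtain ⟨hu, hb⟩ := hT 1 le_rfl (m:ℂ) hnorm
      have h1 : (1 : X →L[ℂ] X) =
          ((m:ℂ) • 1 - T) * Ring.inverse ((m:ℂ) • (1 : X →L[ℂ] X) - T) :=
        (Ring.mul_inverse_cancel _ hu).symm
      have hb' : ‖Ring.inverse ((m:ℂ) • (1 : X →L[ℂ] X) - T)‖ ≤ Ks / ((m:ℝ) - 1) := by
        have := hb
        rw [pow_one, pow_one, Complex.norm_natCast] at this
        exact this
      calc ‖(1 : X →L[ℂ] X)‖
          ≤ ‖(m:ℂ) • (1 : X →L[ℂ] X) - T‖ *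
            ‖Ring.inverse ((m:ℂ) • (1 : X →L[ℂ] X) - T)‖ := by
            conv_lhs => rw [h1]
            exact norm_mul_le _ _
        _ ≤ ((m:ℝ) + ‖T‖) * (Ks / ((m:ℝ) - 1)) := by
            refine mul_le_mul ?_ hb' (norm_nonneg _) (by positivity)
            refine (norm_sub_le _ _).trans ?_
            have : ‖(m:ℂ) • (1 : X →L[ℂ] X)‖ ≤ (m:ℝ) := by
              rw [norm_smul ((m:ℂ)) (1 : X →L[ℂ] X), Complex.norm_natCast]
              calc (m:ℝ) * ‖(1 : X →L[ℂ] X)‖ ≤ (m:ℝ) * 1 := by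
                    exact mul_le_mul_of_nonneg_left h1le (by positivity)
                _ = (m:ℝ) := mul_one _
            linarith
    have htend : Filter.Tendsto (fun m : ℕ => ((m:ℝ) + ‖T‖) * (Ks / ((m:ℝ) - 1)))
        Filter.atTop (nhds Ks) := by
      have h1 : Filter.Tendsto (fun m : ℕ => ((m:ℝ) - 1)) Filter.atTop Filter.atTop := by
        have := Filter.tendsto_atTop_add_const_right Filter.atTop (-1)
          (tendsto_natCast_atTop_atTop (R := ℝ))
        simpa [sub_eq_add_neg] using this
      have h2 : Filter.Tendsto (fun m : ℕ => ((m:ℝ) - 1)⁻¹) Filter.atTop (nhds 0) :=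
        h1.inv_tendsto_atTop
      have h3 : Filter.Tendsto (fun m : ℕ => Ks + (Ks * (‖T‖ + 1)) * ((m:ℝ) - 1)⁻¹)
          Filter.atTop (nhds (Ks + (Ks * (‖T‖ + 1)) * 0)) :=
        tendsto_const_nhds.add (h2.const_mul _)
      rw [mul_zero, add_zero] at h3
      refine h3.congr' ?_
      filter_upwards [Filter.eventually_ge_atTop 2] with m hm
      have hm1 : ((m:ℝ) - 1) ≠ 0 := by
        have : (2:ℝ) ≤ (m:ℝ) := by exact_mod_cast hm
        intro h; rw [sub_eq_zero] at h; linarith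
      field_simp
      ring
    have hKs1 : ‖(1 : X →L[ℂ] X)‖ ≤ Ks :=
      ge_of_tendsto htend (Filter.eventually_atTop.2 ⟨2, key⟩)
    rw [zero_smul, NormedSpace.exp_zero, norm_zero]
    calc ‖(1 : X →L[ℂ] X)‖ ≤ Ks := hKs1
      _ = Ks * Real.exp 0 := by rw [Real.exp_zero, mul_one]
  · -- ξ ≠ 0
    have hξ : 0 < ‖ξ‖ := norm_pos_iff.2 hξ0
    set c : ℝ := ‖ξ‖ * ‖T‖ with hc
    have hc0 : 0 ≤ c := by positivity
    set E : ℕ → ℝ := fun n => 2 * c ^ 2 * Real.exp (2 * c) / n with hE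
    set F : ℕ → ℝ := fun n => Ks * ((1 - ‖ξ‖ / n) ^ n)⁻¹ with hF
    have main : ∀ n : ℕ, 1 ≤ n → 2 * ‖ξ‖ ≤ (n:ℝ) → 2 * c ≤ (n:ℝ) →
        ‖NormedSpace.exp (ξ • T)‖ ≤ E n + F n := by
      intro n hn1 hnξ hnc
      have hn0 : (0:ℝ) < n := by exact_mod_cast hn1
      have hnne : ((n:ℂ)) ≠ 0 := by exact_mod_cast (Nat.one_le_iff_ne_zero.1 hn1)
      set z : ℂ := ((n:ℂ))⁻¹ * ξ with hz
      set a : X →L[ℂ] X := z • T with ha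
      have hr : ‖a‖ = c / n := by
        rw [ha, norm_smul z T, hz, norm_mul, norm_inv, Complex.norm_natCast, hc]
        ring
      have hr2 : ‖a‖ ≤ 1 / 2 := by
        rw [hr, div_le_div_iff₀ hn0 (by norm_num)]
        linarith
      have hr1 : ‖a‖ < 1 := lt_of_le_of_lt hr2 (by norm_num)
      have hr0 : 0 ≤ ‖a‖ := norm_nonneg a
      set A : X →L[ℂ] X := NormedSpace.exp a with hA
      set B : X →L[ℂ] X := Ring.inverse (1 - a) with hB
      set M : ℝ := Real.exp (2 * ‖a‖) with hM
      have hAM : ‖A‖ ≤ M := by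
        refine (aux_norm_exp_le h1le a).trans ?_
        exact Real.exp_le_exp.2 (by linarith)
      have hBM : ‖B‖ ≤ M := by
        refine (aux_inv_norm h1le a hr1).trans ?_
        rw [← one_div, div_le_iff₀ (by linarith)]
        nlinarith [mul_le_mul_of_nonneg_right (Real.add_one_le_exp (2 * ‖a‖))
          (by linarith : (0:ℝ) ≤ 1 - ‖a‖)]
      have hdiff : ‖A - B‖ ≤ ‖a‖ ^ 2 * (1 - ‖a‖)⁻¹ := aux_exp_sub_inv h1le a hr1
      have hexp : NormedSpace.exp (ξ • T) = A ^ n := by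
        have hsm : ξ • T = n • a := by
          rw [ha, ← Nat.cast_smul_eq_nsmul ℂ, smul_smul, hz]
          congr 1
          field_simp
        letI : NormedAlgebra ℚ (X →L[ℂ] X) := .restrictScalars ℚ ℂ (X →L[ℂ] X)
        rw [hsm, hA, NormedSpace.exp_nsmul]
      -- bound on ‖A ^ n - B ^ n‖
      have hMpow : M ^ (n - 1) ≤ Real.exp (2 * c) := by
        rw [hM, ← Real.exp_nat_mul]
        refine Real.exp_le_exp.2 ?_
        have hcast : ((n - 1 : ℕ) : ℝ) ≤ (n:ℝ) := by exact_mod_cast Nat.sub_le n 1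
        calc ((n - 1 : ℕ) : ℝ) * (2 * ‖a‖) ≤ (n:ℝ) * (2 * ‖a‖) := by
              exact mul_le_mul_of_nonneg_right hcast (by positivity)
          _ = 2 * c := by rw [hr]; field_simp
      have hgeom2 : (1 - ‖a‖)⁻¹ ≤ 2 := by
        rw [← one_div, div_le_iff₀ (by linarith)]
        linarith
      have hpowdiff : ‖A ^ n - B ^ n‖ ≤ E n := by
        calc ‖A ^ n - B ^ n‖ ≤ n * M ^ (n - 1) * ‖A - B‖ :=
              aux_pow_sub_pow A B M hAM hBM n
          _ ≤ n * Real.exp (2 * c) * (‖a‖ ^ 2 * (1 - ‖a‖)⁻¹) := by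
              refine mul_le_mul (mul_le_mul_of_nonneg_left hMpow (by positivity))
                hdiff (norm_nonneg _) (by positivity)
          _ ≤ n * Real.exp (2 * c) * (‖a‖ ^ 2 * 2) := by
              refine mul_le_mul_of_nonneg_left ?_ (by positivity)
              exact mul_le_mul_of_nonneg_left hgeom2 (by positivity)
          _ = E n := by
              rw [hE, hr]
              field_simp
      -- bound on ‖B ^ n‖
      have hBn : ‖B ^ n‖ ≤ F n := by
        set lam : ℂ := (n:ℂ) * ξ⁻¹ with hlam
        have hlamne : lam ≠ 0 := mul_ne_zero hnne (inv_ne_zero hξ0)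
        have hlamnorm : ‖lam‖ = (n:ℝ) / ‖ξ‖ := by
          rw [hlam, norm_mul, norm_inv, Complex.norm_natCast, div_eq_mul_inv]
        have hlam1 : 1 < ‖lam‖ := by
          rw [hlamnorm, lt_div_iff₀ hξ, one_mul]
          linarith
        obtain ⟨hu, hb⟩ := hT n hn1 lam hlam1
        have hfact : lam • (1 : X →L[ℂ] X) - T = lam • ((1 : X →L[ℂ] X) - a) := by
          rw [smul_sub, ha, smul_smul]
          congr 1
          rw [hlam, hz]
          have : (n:ℂ) * ξ⁻¹ * ((n:ℂ)⁻¹ * ξ) = 1 := by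
            field_simp
          rw [this, one_smul]
        set U : (X →L[ℂ] X)ˣ := Units.oneSub a hr1 with hU
        have hUval : ((1 : X →L[ℂ] X) - a) = (U : X →L[ℂ] X) := rfl
        have hBU : B = ((U⁻¹ : (X →L[ℂ] X)ˣ) : X →L[ℂ] X) := by
          rw [hB, hUval, Ring.inverse_unit]
        have hinv : Ring.inverse (lam • (1 : X →L[ℂ] X) - T) = lam⁻¹ • B := by
          rw [hfact, hUval, aux_inverse_smul lam hlamne U, hBU]
        have hBlam : B = lam • Ring.inverse (lam • (1 : X →L[ℂ] X) - T) := by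
          rw [hinv, smul_smul, mul_inv_cancel₀ hlamne, one_smul]
        have hBn' : B ^ n = lam ^ n • Ring.inverse (lam • (1 : X →L[ℂ] X) - T) ^ n := by
          rw [hBlam, smul_pow]
        have hnorm : ‖B ^ n‖ ≤ ‖lam‖ ^ n * (Ks / (‖lam‖ - 1) ^ n) := by
          rw [hBn', norm_smul (lam ^ n) (Ring.inverse (lam • (1 : X →L[ℂ] X) - T) ^ n), norm_pow]
          exact mul_le_mul_of_nonneg_left hb (by positivity)
        refine hnorm.trans ?_
        rw [hF]
        have hs1 : ‖ξ‖ / n < 1 := by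
          rw [div_lt_one hn0]; linarith
        have hlampos : 0 < ‖lam‖ - 1 := by linarith
        have heq : ‖lam‖ ^ n * (Ks / (‖lam‖ - 1) ^ n) = Ks * ((1 - ‖ξ‖ / n) ^ n)⁻¹ := by
          have hne : ((n:ℝ) - ‖ξ‖) ≠ 0 := by
            intro h; rw [sub_eq_zero] at h; nlinarith
          rw [hlamnorm]
          exact aux_ratio (n:ℝ) ‖ξ‖ Ks hn0 hξ hne n
        rw [heq]
      calc ‖NormedSpace.exp (ξ • T)‖ = ‖(A ^ n - B ^ n) + B ^ n‖ := by
            rw [hexp, sub_add_cancel]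
        _ ≤ ‖A ^ n - B ^ n‖ + ‖B ^ n‖ := norm_add_le _ _
        _ ≤ E n + F n := add_le_add hpowdiff hBn
    -- limits
    have htendE : Filter.Tendsto E Filter.atTop (nhds 0) :=
      tendsto_const_div_atTop_nhds_zero_nat _
    have htendF : Filter.Tendsto F Filter.atTop (nhds (Ks * Real.exp ‖ξ‖)) := by
      have h1 : Filter.Tendsto (fun n : ℕ => (1 - ‖ξ‖ / n) ^ n) Filter.atTop
          (nhds (Real.exp (-‖ξ‖))) := by
        have := Real.tendsto_one_add_div_pow_exp (-‖ξ‖)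
        refine this.congr ?_
        intro n
        rw [neg_div, ← sub_eq_add_neg]
      have h2 : Filter.Tendsto (fun n : ℕ => ((1 - ‖ξ‖ / n) ^ n)⁻¹) Filter.atTop
          (nhds (Real.exp (-‖ξ‖))⁻¹) := h1.inv₀ (Real.exp_ne_zero _)
      rw [Real.exp_neg, inv_inv] at h2
      exact h2.const_mul Ks
    have htendsum : Filter.Tendsto (fun n => E n + F n) Filter.atTop
        (nhds (Ks * Real.exp ‖ξ‖)) := by
      have := htendE.add htendF
      rwa [zero_add] at this
    refine ge_of_tendsto htendsum ?_
    have hev1 := (tendsto_natCast_atTop_atTop (R := ℝ)).eventually_ge_atTop (2 * ‖ξ‖)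
    have hev2 := (tendsto_natCast_atTop_atTop (R := ℝ)).eventually_ge_atTop (2 * c)
    filter_upwards [hev1, hev2, Filter.eventually_ge_atTop 1] with n h1 h2 h3
    exact main n h3 h1 h2
end

section
/- If T is strongly Kreiss bounded on a Banach space X with constant K_s, then ‖T^n‖ ≤ K_s √(2π(n+1)) for all n ∈ ℕ. -/
open Filter Finset Real
open scoped Topology NNReal ENNReal Nat

section BanachAlg
variable {A : Type*} [NormedRing A] [NormedAlgebra ℂ A] [CompleteSpace A]

-- units on the unit disc
lemma disc_unit (T : A)
    (hU : ∀ lam : ℂ, 1 < ‖lam‖ → IsUnit (lam • (1 : A) - T))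
    {z : ℂ} (hz : ‖z‖ < 1) : IsUnit (1 - z • T) := by
  rcases eq_or_ne z 0 with rfl | hz0
  · simpa using isUnit_one
  · have h1 : 1 < ‖z⁻¹‖ := by
      rw [norm_inv]
      have h0 : 0 < ‖z‖ := norm_pos_iff.mpr hz0
      exact (one_lt_inv₀ h0).mpr hz
    have hu := hU z⁻¹ h1
    have key : (1 : A) - z • T = z • (z⁻¹ • (1 : A) - T) := by
      rw [smul_sub, smul_smul, mul_inv_cancel₀ hz0, one_smul]
    rw [key]
    exact hu.smul (Units.mk0 z hz0)

-- spectral radius at most 1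
lemma specrad_le_one (T : A)
    (hU : ∀ lam : ℂ, 1 < ‖lam‖ → IsUnit (lam • (1 : A) - T)) :
    spectralRadius ℂ T ≤ 1 := by
  apply iSup₂_le
  intro μ hμ
  rw [spectrum.mem_iff] at hμ
  by_contra hlt
  push_neg at hlt
  apply hμ
  have h1 : 1 < ‖μ‖ := by
    have := hlt
    rw [← ENNReal.coe_one, ENNReal.coe_lt_coe] at this
    exact_mod_cast this
  simpa [Algebra.algebraMap_eq_smul_one] using hU μ h1

-- the Neumann power series on every r < 1
lemma neumann (T : A)
    (hU : ∀ lam : ℂ, 1 < ‖lam‖ → IsUnit (lam • (1 : A) - T))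
    {r : ℝ≥0} (hr0 : 0 < r) (hr : (r : ℝ) < 1) :
    HasFPowerSeriesOnBall (fun z : ℂ => Ring.inverse (1 - z • T))
      (fun n => ContinuousMultilinearMap.mkPiRing ℂ (Fin n) (T ^ n)) 0 r := by
  have hsr : (r : ℝ≥0∞) < (spectralRadius ℂ T)⁻¹ := by
    calc (r : ℝ≥0∞) < 1 := by exact_mod_cast hr
    _ ≤ (spectralRadius ℂ T)⁻¹ := by
        rw [ENNReal.le_inv_iff_mul_le, one_mul]
        exact specrad_le_one T hU
  have H₁ := (spectrum.differentiableOn_inverse_one_sub_smul hsr).hasFPowerSeriesOnBall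
    (by exact_mod_cast hr0)
  exact (spectrum.hasFPowerSeriesOnBall_inverse_one_sub_smul ℂ T).exchange_radius H₁

end BanachAlg

-- binomial-geometric summability
lemma binom_geo_summable (K : ℕ) {x : ℝ} (hx0 : 0 < x) (hx1 : x < 1) :
    Summable (fun m : ℕ => ((m + K).choose K : ℝ) * x ^ m) := by
  have h1 : Summable (fun n : ℕ => (n : ℝ) ^ K * x ^ n) :=
    summable_pow_mul_geometric_of_norm_lt_one K (by rwa [Real.norm_eq_abs, abs_of_pos hx0])
  have h2 : Summable (fun m : ℕ => ((m + K : ℕ) : ℝ) ^ K * x ^ (m + K)) :=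
    (summable_nat_add_iff K).mpr h1
  have h3 : Summable (fun m : ℕ => (((m + K : ℕ) : ℝ) ^ K * x ^ (m + K)) * (x⁻¹) ^ K) :=
    h2.mul_right _
  refine h3.of_nonneg_of_le (fun m => by positivity) (fun m => ?_)
  have hxne : x ≠ 0 := ne_of_gt hx0
  have hpow : x ^ (m + K) * (x⁻¹) ^ K = x ^ m := by
    rw [pow_add, inv_pow, mul_assoc, mul_inv_cancel₀ (by positivity), mul_one]
  rw [mul_assoc, hpow]
  have hch : ((m + K).choose K : ℝ) ≤ ((m + K : ℕ) : ℝ) ^ K := by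
    calc ((m + K).choose K : ℝ) ≤ (((m + K : ℕ)) ^ K : ℝ) / (K ! : ℝ) := by
          exact_mod_cast Nat.choose_le_pow_div K (m + K)
    _ ≤ (((m + K : ℕ)) ^ K : ℝ) := by
        apply div_le_self (by positivity)
        exact_mod_cast Nat.one_le_iff_ne_zero.mpr (Nat.factorial_ne_zero K)
  exact mul_le_mul_of_nonneg_right hch (pow_nonneg hx0.le m)

section BanachAlg2
variable {A : Type*} [NormedRing A] [NormedAlgebra ℂ A] [CompleteSpace A]

lemma norm_summable (T : A)
    (hU : ∀ lam : ℂ, 1 < ‖lam‖ → IsUnit (lam • (1 : A) - T))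
    (K : ℕ) {ρ : ℝ} (h0 : 0 < ρ) (h1 : ρ < 1) :
    Summable (fun m : ℕ => ((m + K).choose K : ℝ) * (ρ ^ m * ‖T ^ m‖)) := by
  set ρ' : ℝ := (1 + ρ) / 2 with hρ'
  have hρ'0 : 0 < ρ' := by positivity
  have hρ'1 : ρ' < 1 := by rw [hρ']; linarith
  have hρρ' : ρ < ρ' := by rw [hρ']; linarith
  set p : FormalMultilinearSeries ℂ ℂ A :=
    fun n => ContinuousMultilinearMap.mkPiRing ℂ (Fin n) (T ^ n) with hp
  have hrad : (ρ'.toNNReal : ℝ≥0∞) < p.radius := by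
    set ρ'' : ℝ := (1 + ρ') / 2 with hρ''
    have hρ''0 : 0 < ρ'' := by positivity
    have hρ''1 : ρ'' < 1 := by rw [hρ'']; linarith
    have h2 : (ρ''.toNNReal : ℝ≥0∞) ≤ p.radius :=
      (neumann T hU (by simpa using hρ''0) (by rwa [Real.coe_toNNReal _ hρ''0.le])).r_le
    refine lt_of_lt_of_le ?_ h2
    rw [ENNReal.coe_lt_coe]
    have : ρ' < ρ'' := by rw [hρ'']; linarith
    exact (Real.toNNReal_lt_toNNReal_iff_of_nonneg hρ'0.le).mpr this
  obtain ⟨C, hC0, hC⟩ := p.norm_mul_pow_le_of_lt_radius hrad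
  have hCb : ∀ m : ℕ, ‖T ^ m‖ * ρ' ^ m ≤ C := by
    intro m
    have := hC m
    rwa [hp, ContinuousMultilinearMap.norm_mkPiRing, Real.coe_toNNReal _ hρ'0.le] at this
  have hsum : Summable (fun m : ℕ => C * (((m + K).choose K : ℝ) * (ρ / ρ') ^ m)) :=
    ((binom_geo_summable K (by positivity) (by rw [div_lt_one hρ'0]; exact hρρ')).mul_left C)
  refine hsum.of_nonneg_of_le (fun m => by positivity) (fun m => ?_)
  have key : ρ ^ m * ‖T ^ m‖ = (ρ / ρ') ^ m * (‖T ^ m‖ * ρ' ^ m) := by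
    rw [div_pow]; field_simp
  rw [key]
  calc ((m + K).choose K : ℝ) * ((ρ / ρ') ^ m * (‖T ^ m‖ * ρ' ^ m))
      ≤ ((m + K).choose K : ℝ) * ((ρ / ρ') ^ m * C) := by
        apply mul_le_mul_of_nonneg_left _ (by positivity)
        exact mul_le_mul_of_nonneg_left (hCb m) (by positivity)
    _ = C * (((m + K).choose K : ℝ) * (ρ / ρ') ^ m) := by ring

end BanachAlg2
section BanachAlg3
variable {A : Type*} [NormedRing A] [NormedAlgebra ℂ A] [CompleteSpace A]

lemma series_one (T : A)
    (hU : ∀ lam : ℂ, 1 < ‖lam‖ → IsUnit (lam • (1 : A) - T))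
    {z : ℂ} (hz : ‖z‖ < 1) :
    HasSum (fun m : ℕ => z ^ m • T ^ m) (Ring.inverse ((1 : A) - z • T)) := by
  set r : ℝ≥0 := ((1 + ‖z‖) / 2).toNNReal with hr
  have hrpos : (0 : ℝ) < (1 + ‖z‖) / 2 := by positivity
  have hr1 : (r : ℝ) < 1 := by
    rw [hr, Real.coe_toNNReal _ hrpos.le]; linarith
  have P := neumann T hU (by simpa [hr] using hrpos) hr1
  have hy : z ∈ Metric.eball (0 : ℂ) r := by
    rw [mem_emetric_ball_zero_iff, enorm_eq_nnnorm, ENNReal.coe_lt_coe, hr]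
    rw [Real.lt_toNNReal_iff_coe_lt, coe_nnnorm]
    linarith
  have H := P.hasSum hy
  simp only [zero_add] at H
  convert H using 2 with m
  · rfl
  simp [ContinuousMultilinearMap.mkPiRing_apply]

lemma series_pow (T : A)
    (hU : ∀ lam : ℂ, 1 < ‖lam‖ → IsUnit (lam • (1 : A) - T)) (K : ℕ) :
    ∀ z : ℂ, ‖z‖ < 1 →
      HasSum (fun m : ℕ => (((m + K).choose K : ℂ) * z ^ m) • T ^ m)
        ((Ring.inverse ((1 : A) - z • T)) ^ (K + 1)) := by
  induction K with
  | zero =>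
    intro z hz
    have H := series_one T hU hz
    rw [pow_one]
    convert H using 2 with m
    simp
  | succ K ih =>
    intro z hz
    rcases eq_or_ne z 0 with rfl | hz0
    · -- trivial case z = 0
      have h0 : HasSum (fun m : ℕ => (((m + (K + 1)).choose (K + 1) : ℂ) * (0 : ℂ) ^ m) • T ^ m)
          (((((0 : ℕ) + (K + 1)).choose (K + 1) : ℂ) * (0 : ℂ) ^ 0) • T ^ 0) := by
        apply hasSum_single (f := fun m : ℕ =>
          (((m + (K + 1)).choose (K + 1) : ℂ) * (0 : ℂ) ^ m) • T ^ m) 0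
        intro b hb
        simp [zero_pow hb]
      simpa [Ring.inverse_one] using h0
    · have hzpos : (0 : ℝ) < ‖z‖ := norm_pos_iff.mpr hz0
      set g := Ring.inverse ((1 : A) - z • T) with hg
      have h1 := ih z hz
      have h2 := series_one T hU hz
      have hna : Summable (fun m : ℕ => ‖(((m + K).choose K : ℂ) * z ^ m) • T ^ m‖) := by
        refine (norm_summable T hU K hzpos hz).congr fun m => ?_
        rw [norm_smul, norm_mul, RCLike.norm_natCast, norm_pow z, mul_assoc]
      have hnb : Summable (fun m : ℕ => ‖z ^ m • T ^ m‖) := by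
        refine ((norm_summable T hU 0 hzpos hz).congr fun m => ?_)
        simp [norm_smul, norm_pow]
      have hconv := (summable_norm_sum_mul_range_of_summable_norm hna hnb).of_norm
      have htsum := tsum_mul_tsum_eq_tsum_sum_range_of_summable_norm hna hnb
      rw [h1.tsum_eq, h2.tsum_eq] at htsum
      have H : HasSum (fun m : ℕ => ∑ i ∈ Finset.range (m + 1),
          ((((i + K).choose K : ℂ) * z ^ i) • T ^ i) * (z ^ (m - i) • T ^ (m - i)))
          (g ^ (K + 1 + 1)) := by
        rw [pow_succ]
        exact hconv.hasSum_iff.mpr htsum.symm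
      convert H using 2 with m
      have step1 : ∀ i ∈ Finset.range (m + 1),
          ((((i + K).choose K : ℂ) * z ^ i) • T ^ i) * (z ^ (m - i) • T ^ (m - i))
            = (((i + K).choose K : ℂ) * z ^ m) • T ^ m := by
        intro i hi
        have him : i ≤ m := Nat.lt_succ_iff.mp (Finset.mem_range.mp hi)
        rw [smul_mul_smul_comm, mul_assoc, ← pow_add, ← pow_add, Nat.add_sub_cancel' him]
      rw [Finset.sum_congr rfl step1, ← Finset.sum_smul, ← Finset.sum_mul]
      congr 2
      have hnat : (m + (K + 1)).choose (K + 1) = ∑ i ∈ Finset.range (m + 1), (i + K).choose K := by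
        rw [← add_assoc]; exact (Nat.sum_range_add_choose m K).symm
      rw [hnat, Nat.cast_sum]

end BanachAlg3
section BanachAlg4
variable {A : Type*} [NormedRing A] [NormedAlgebra ℂ A] [CompleteSpace A]

lemma key_ineq (T : A) (Ks : ℝ)
    (hU : ∀ lam : ℂ, 1 < ‖lam‖ → IsUnit (lam • (1 : A) - T))
    (hKr : ∀ k : ℕ, 1 ≤ k → ∀ lam : ℂ, 1 < ‖lam‖ →
        ‖Ring.inverse (lam • (1 : A) - T) ^ k‖ ≤ Ks / (‖lam‖ - 1) ^ k)
    (n K : ℕ) {ρ : ℝ} (h0 : 0 < ρ) (h1 : ρ < 1) :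
    ((n + K).choose K : ℝ) * ‖T ^ n‖ ≤ Ks / ((1 - ρ) ^ (K + 1) * ρ ^ n) := by
  set g : ℂ → A := fun z => (Ring.inverse ((1 : A) - z • T)) ^ (K + 1) with hgdef
  set q : FormalMultilinearSeries ℂ ℂ A :=
    fun m => ContinuousMultilinearMap.mkPiRing ℂ (Fin m) ((((m + K).choose K : ℂ)) • T ^ m)
    with hqdef
  set R : ℝ≥0 := ρ.toNNReal with hRdef
  have hRρ : (R : ℝ) = ρ := Real.coe_toNNReal _ h0.le
  have hRpos : (0 : ℝ≥0) < R := by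
    rw [hRdef]; exact Real.toNNReal_pos.mpr h0
  have hqnorm : ∀ m : ℕ, ‖q m‖ = ((m + K).choose K : ℝ) * ‖T ^ m‖ := by
    intro m
    rw [hqdef]
    rw [ContinuousMultilinearMap.norm_mkPiRing, norm_smul, RCLike.norm_natCast]
  -- our explicit power series for g on the ball of radius R
  have hQ : HasFPowerSeriesOnBall g q 0 R := by
    refine ⟨q.le_radius_of_summable ?_, by exact_mod_cast hRpos, ?_⟩
    · refine ((norm_summable T hU K h0 h1).congr fun m => ?_).congr fun m => rfl
      rw [hqnorm m, hRρ]; ring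
    · intro y hy
      have hy1 : ‖y‖ < 1 := by
        rw [mem_emetric_ball_zero_iff, enorm_eq_nnnorm, ENNReal.coe_lt_coe, hRdef,
          Real.lt_toNNReal_iff_coe_lt, coe_nnnorm] at hy
        linarith
      have hs := series_pow T hU K y hy1
      simp only [zero_add]
      convert hs using 2 with m
      · rfl
      simp only [hqdef, ContinuousMultilinearMap.mkPiRing_apply, Fin.prod_const]
      rw [smul_smul, mul_comm]
  -- differentiability of g on the closed ball
  have hsr : ((R : ℝ≥0) : ℝ≥0∞) < (spectralRadius ℂ T)⁻¹ := by
    calc ((R : ℝ≥0) : ℝ≥0∞) < 1 := by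
          rw [← ENNReal.coe_one, ENNReal.coe_lt_coe]
          exact_mod_cast hRρ ▸ h1
    _ ≤ (spectralRadius ℂ T)⁻¹ := by
        rw [ENNReal.le_inv_iff_mul_le, one_mul]
        exact specrad_le_one T hU
  have hd : DifferentiableOn ℂ g (Metric.closedBall (0 : ℂ) R) :=
    (spectrum.differentiableOn_inverse_one_sub_smul hsr).pow (K + 1)
  have HC := hd.hasFPowerSeriesOnBall hRpos
  have heq : q = cauchyPowerSeries g 0 R :=
    hQ.hasFPowerSeriesAt.eq_formalMultilinearSeries HC.hasFPowerSeriesAt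
  -- pointwise bound on the circle
  have hcirc : ∀ θ : ℝ, ‖g (circleMap 0 ρ θ)‖ ≤ Ks / (1 - ρ) ^ (K + 1) := by
    intro θ
    set z : ℂ := circleMap 0 ρ θ with hzdef
    have hzn : ‖z‖ = ρ := by
      rw [hzdef, norm_circleMap_zero, abs_of_pos h0]
    have hz0 : z ≠ 0 := by
      intro h; rw [h, norm_zero] at hzn; exact absurd hzn.symm (ne_of_gt h0)
    have hlam : 1 < ‖z⁻¹‖ := by
      rw [norm_inv, hzn]
      exact (one_lt_inv₀ h0).mpr h1
    have hu1 : IsUnit (z⁻¹ • (1 : A) - T) := hU _ hlam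
    have hkey : (1 : A) - z • T = z • (z⁻¹ • (1 : A) - T) := by
      rw [smul_sub, smul_smul, mul_inv_cancel₀ hz0, one_smul]
    have hu2 : IsUnit ((1 : A) - z • T) := disc_unit T hU (hzn ▸ h1)
    have hinv : Ring.inverse ((1 : A) - z • T) = z⁻¹ • Ring.inverse (z⁻¹ • (1 : A) - T) := by
      have hmul : (z⁻¹ • Ring.inverse (z⁻¹ • (1 : A) - T)) * ((1 : A) - z • T) = 1 := by
        rw [hkey, smul_mul_smul_comm, inv_mul_cancel₀ hz0, Ring.inverse_mul_cancel _ hu1,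
          one_smul]
      have h3 : ((z⁻¹ • Ring.inverse (z⁻¹ • (1 : A) - T)) * ((1 : A) - z • T)) *
          Ring.inverse ((1 : A) - z • T) = (z⁻¹ • Ring.inverse (z⁻¹ • (1 : A) - T)) *
          (((1 : A) - z • T) * Ring.inverse ((1 : A) - z • T)) := mul_assoc _ _ _
      rw [hmul, one_mul, Ring.mul_inverse_cancel _ hu2, mul_one] at h3
      exact h3
    have hKr' := hKr (K + 1) (Nat.le_add_left 1 K) z⁻¹ hlam
    have hnz : ‖z⁻¹‖ = ρ⁻¹ := by rw [norm_inv, hzn]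
    rw [hnz] at hKr'
    have hval : ‖g z‖ = (ρ⁻¹) ^ (K + 1) * ‖Ring.inverse (z⁻¹ • (1 : A) - T) ^ (K + 1)‖ := by
      rw [hgdef]
      simp only []
      rw [hinv, smul_pow, norm_smul, norm_pow, hnz]
    rw [hval]
    have hb1 : (ρ⁻¹) ^ (K + 1) * ‖Ring.inverse (z⁻¹ • (1 : A) - T) ^ (K + 1)‖
        ≤ (ρ⁻¹) ^ (K + 1) * (Ks / (ρ⁻¹ - 1) ^ (K + 1)) :=
      mul_le_mul_of_nonneg_left hKr' (by positivity)
    refine hb1.trans (le_of_eq ?_)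
    have hρinv : 0 < ρ⁻¹ - 1 := by
      rw [sub_pos]; exact (one_lt_inv₀ h0).mpr h1
    have hρ1 : (0:ℝ) < 1 - ρ := by linarith
    have e2 : (1 - ρ) ^ (K + 1) * ρ⁻¹ ^ (K + 1) = (ρ⁻¹ - 1) ^ (K + 1) := by
      rw [← mul_pow]; congr 1; field_simp
    rw [mul_comm, div_mul_eq_mul_div,
      div_eq_div_iff (ne_of_gt (pow_pos hρinv _)) (ne_of_gt (pow_pos hρ1 _))]
    calc Ks * ρ⁻¹ ^ (K + 1) * (1 - ρ) ^ (K + 1)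
        = Ks * ((1 - ρ) ^ (K + 1) * ρ⁻¹ ^ (K + 1)) := by ring
      _ = Ks * (ρ⁻¹ - 1) ^ (K + 1) := by rw [e2]
  -- integral bound
  have hgcont : Continuous fun θ : ℝ => ‖g (circleMap 0 ρ θ)‖ := by
    have hcont : ContinuousOn g (Metric.closedBall (0 : ℂ) ρ) := by
      rw [← hRρ]; exact hd.continuousOn
    refine (hcont.comp_continuous (continuous_circleMap 0 ρ) fun θ => ?_).norm
    have := circleMap_mem_sphere (0 : ℂ) h0.le θ
    exact Metric.sphere_subset_closedBall this
  have hInt : (∫ θ : ℝ in (0)..2 * π, ‖g (circleMap 0 ρ θ)‖)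
      ≤ 2 * π * (Ks / (1 - ρ) ^ (K + 1)) := by
    calc (∫ θ : ℝ in (0)..2 * π, ‖g (circleMap 0 ρ θ)‖)
        ≤ ∫ _ : ℝ in (0)..2 * π, Ks / (1 - ρ) ^ (K + 1) := by
          apply intervalIntegral.integral_mono_on Real.two_pi_pos.le
            (hgcont.intervalIntegrable 0 (2 * π)) intervalIntegrable_const
          exact fun θ _ => hcirc θ
      _ = 2 * π * (Ks / (1 - ρ) ^ (K + 1)) := by
          rw [intervalIntegral.integral_const, smul_eq_mul, sub_zero]
  -- put it together
  have hb := norm_cauchyPowerSeries_le g 0 (R : ℝ) n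
  rw [← heq] at hb
  rw [hqnorm n] at hb
  have habs : |(R : ℝ)| = ρ := by rw [hRρ, abs_of_pos h0]
  rw [habs, hRρ] at hb
  have hKs0 : 0 ≤ Ks / (1 - ρ) ^ (K + 1) := by
    have := (norm_nonneg (g (circleMap 0 ρ 0))).trans (hcirc 0)
    exact this
  calc ((n + K).choose K : ℝ) * ‖T ^ n‖
      ≤ ((2 * π)⁻¹ * ∫ θ : ℝ in (0)..2 * π, ‖g (circleMap 0 ρ θ)‖) * ρ⁻¹ ^ n := hb
    _ ≤ ((2 * π)⁻¹ * (2 * π * (Ks / (1 - ρ) ^ (K + 1)))) * ρ⁻¹ ^ n := by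
        apply mul_le_mul_of_nonneg_right _ (by positivity)
        exact mul_le_mul_of_nonneg_left hInt (by positivity)
    _ = Ks / ((1 - ρ) ^ (K + 1) * ρ ^ n) := by
        have hρ1 : (0:ℝ) < 1 - ρ := by linarith
        rw [← mul_assoc, inv_mul_cancel₀ (by positivity : (2 * π : ℝ) ≠ 0), one_mul]
        rw [div_mul_eq_mul_div, div_eq_div_iff (ne_of_gt (pow_pos hρ1 _))
          (ne_of_gt (mul_pos (pow_pos hρ1 _) (pow_pos h0 _)))]
        have e3 : (ρ⁻¹) ^ n * ρ ^ n = 1 := by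
          rw [← mul_pow, inv_mul_cancel₀ (ne_of_gt h0), one_pow]
        calc Ks * ρ⁻¹ ^ n * ((1 - ρ) ^ (K + 1) * ρ ^ n)
            = Ks * (1 - ρ) ^ (K + 1) * ((ρ⁻¹) ^ n * ρ ^ n) := by ring
          _ = Ks * (1 - ρ) ^ (K + 1) := by rw [e3, mul_one]

end BanachAlg4
section BanachAlg5
variable {A : Type*} [NormedRing A] [NormedAlgebra ℂ A] [CompleteSpace A]

-- the product identity over ℕ
lemma choose_prod_id (n K : ℕ) :
    ((n + K).choose K : ℝ) * (n ! : ℝ) = ∏ i ∈ Finset.range n, ((K : ℝ) + 1 + i) := by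
  have h2 : (∏ i ∈ Finset.range n, (K + 1 + i)) * K ! = (n + K)! := by
    induction n with
    | zero => simp
    | succ n ih =>
      rw [Finset.prod_range_succ, mul_right_comm, ih]
      have h5 : n + 1 + K = (n + K) + 1 := by omega
      rw [h5, Nat.factorial_succ]
      ring_nf
  have h1 : (n + K).choose K * n ! * K ! = (n + K)! := by
    have h6 := Nat.choose_mul_factorial_mul_factorial (Nat.le_add_left K n)
    rw [Nat.add_sub_cancel] at h6
    rw [mul_right_comm]
    exact h6
  have h3 : (n + K).choose K * n ! = ∏ i ∈ Finset.range n, (K + 1 + i) := by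
    have hKfac : 0 < K ! := Nat.factorial_pos K
    exact Nat.eq_of_mul_eq_mul_right hKfac (h1.trans h2.symm)
  calc ((n + K).choose K : ℝ) * (n ! : ℝ)
      = (((n + K).choose K * n ! : ℕ) : ℝ) := by push_cast; ring
    _ = ((∏ i ∈ Finset.range n, (K + 1 + i) : ℕ) : ℝ) := by rw [h3]
    _ = ∏ i ∈ Finset.range n, ((K : ℝ) + 1 + i) := by push_cast; ring

lemma norm_pow_le_factorial (T : A) (Ks : ℝ)
    (hU : ∀ lam : ℂ, 1 < ‖lam‖ → IsUnit (lam • (1 : A) - T))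
    (hKr : ∀ k : ℕ, 1 ≤ k → ∀ lam : ℂ, 1 < ‖lam‖ →
        ‖Ring.inverse (lam • (1 : A) - T) ^ k‖ ≤ Ks / (‖lam‖ - 1) ^ k)
    (n : ℕ) (hn : 1 ≤ n) :
    ‖T ^ n‖ ≤ Ks * ((n ! : ℝ) / (n : ℝ) ^ n * Real.exp n) := by
  have hn0 : (0 : ℝ) < (n : ℝ) := by exact_mod_cast hn
  -- the comparison sequence
  set e : ℕ → ℝ := fun k => (n ! : ℝ) / (n : ℝ) ^ n * (1 + (n : ℝ) / k) ^ k *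
    ∏ i ∈ Finset.range n, (((n : ℝ) + k) / ((k : ℝ) + i)) with hedef
  have hbound : ∀ k : ℕ, 1 ≤ k → ‖T ^ n‖ ≤ Ks * e k := by
    intro k hk
    obtain ⟨K, rfl⟩ : ∃ K, k = K + 1 := ⟨k - 1, by omega⟩
    set k := K + 1
    have hk0 : (0 : ℝ) < (k : ℝ) := by exact_mod_cast hk
    set ρ : ℝ := (n : ℝ) / ((n : ℝ) + k) with hρdef
    have hnk : (0 : ℝ) < (n : ℝ) + k := by linarith
    have hρ0 : 0 < ρ := by positivity
    have hρ1 : ρ < 1 := by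
      rw [hρdef, div_lt_one hnk]; linarith
    have hkey := key_ineq T Ks hU hKr n K hρ0 hρ1
    have hC0 : (0 : ℝ) < ((n + K).choose K : ℝ) := by
      exact_mod_cast Nat.choose_pos (Nat.le_add_left K n)
    have hD0 : (0 : ℝ) < (1 - ρ) ^ (K + 1) * ρ ^ n := by
      have : (0:ℝ) < 1 - ρ := by linarith
      positivity
    -- ‖T^n‖ ≤ Ks / (D * C)
    have h4 : ‖T ^ n‖ ≤ Ks / ((1 - ρ) ^ (K + 1) * ρ ^ n * ((n + K).choose K : ℝ)) := by
      rw [← div_div]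
      rw [le_div_iff₀ hC0, mul_comm]
      exact hkey
    refine h4.trans (le_of_eq ?_)
    -- now the arithmetic identity  Ks / (D*C) = Ks * e k
    have hprod0 : (0 : ℝ) < ∏ i ∈ Finset.range n, ((k : ℝ) + i) := by
      apply Finset.prod_pos; intro i _; positivity
    have hCprod : ((n + K).choose K : ℝ) = (∏ i ∈ Finset.range n, ((k : ℝ) + i)) / (n ! : ℝ) := by
      rw [eq_div_iff (by positivity : (n ! : ℝ) ≠ 0)]
      rw [choose_prod_id n K]
      apply Finset.prod_congr rfl
      intro i _
      push_cast
      simp only [k, Nat.cast_add, Nat.cast_one]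
    have h1ρ : 1 - ρ = (k : ℝ) / ((n : ℝ) + k) := by
      rw [hρdef]; field_simp; ring
    have hone : 1 + (n : ℝ) / k = ((n : ℝ) + k) / k := by field_simp; ring
    have hprodsplit : (∏ i ∈ Finset.range n, (((n : ℝ) + k) / ((k : ℝ) + i)))
        = ((n : ℝ) + k) ^ n / ∏ i ∈ Finset.range n, ((k : ℝ) + i) := by
      rw [Finset.prod_div_distrib, Finset.prod_const, Finset.card_range]
    rw [hedef]
    simp only []
    rw [hone, hprodsplit, hCprod, h1ρ, hρdef]
    rw [div_pow, div_pow, div_pow]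
    field_simp
    ring
  -- limits
  have hKs0 : 0 ≤ Ks := by
    have h := key_ineq T Ks hU hKr 0 0 (by norm_num : (0:ℝ) < 1/2) (by norm_num)
    have h0 : (0 : ℝ) ≤ Ks / ((1 - 1/2) ^ (0 + 1) * (1/2 : ℝ) ^ 0) := by
      refine le_trans ?_ h
      positivity
    have hd : (0 : ℝ) < ((1 - 1/2) ^ (0 + 1) * (1/2 : ℝ) ^ 0) := by norm_num
    by_contra hneg
    push_neg at hneg
    have : Ks / ((1 - 1/2) ^ (0 + 1) * (1/2 : ℝ) ^ 0) < 0 := div_neg_of_neg_of_pos hneg hd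
    linarith
  have hlim : Tendsto (fun k : ℕ => Ks * e k) atTop
      (𝓝 (Ks * ((n ! : ℝ) / (n : ℝ) ^ n * Real.exp n))) := by
    have hf : Tendsto (fun k : ℕ => (1 + (n : ℝ) / k) ^ k) atTop (𝓝 (Real.exp n)) :=
      Real.tendsto_one_add_div_pow_exp (n : ℝ)
    have hg : Tendsto (fun k : ℕ => ∏ i ∈ Finset.range n, (((n : ℝ) + k) / ((k : ℝ) + i)))
        atTop (𝓝 1) := by
      have := tendsto_finset_prod (f := fun (i : ℕ) (k : ℕ) => ((n : ℝ) + k) / ((k : ℝ) + i))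
        (x := atTop) (a := fun _ => (1 : ℝ)) (Finset.range n) ?_
      · simpa using this
      · intro i _
        have hden : Tendsto (fun k : ℕ => (k : ℝ) + i) atTop atTop :=
          tendsto_atTop_add_const_right _ _ tendsto_natCast_atTop_atTop
        have hz : Tendsto (fun k : ℕ => ((n : ℝ) - i) / ((k : ℝ) + i)) atTop (𝓝 0) := by
          simp only [div_eq_mul_inv]
          have := hden.inv_tendsto_atTop
          have h2 := this.const_mul ((n : ℝ) - i)
          simpa using h2
        have heq : ∀ᶠ k : ℕ in atTop,
            1 + ((n : ℝ) - i) / ((k : ℝ) + i) = ((n : ℝ) + k) / ((k : ℝ) + i) := by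
          filter_upwards [eventually_ge_atTop 1] with k hk
          have hki : (0 : ℝ) < (k : ℝ) + i := by
            have : (1 : ℝ) ≤ (k : ℝ) := by exact_mod_cast hk
            positivity
          field_simp
          ring
        have h7 : Tendsto (fun k : ℕ => 1 + ((n : ℝ) - i) / ((k : ℝ) + i)) atTop
            (𝓝 (1 + 0)) := (tendsto_const_nhds (x := (1:ℝ))).add hz
        rw [add_zero] at h7
        exact Tendsto.congr' heq h7
    have := ((hf.mul hg).const_mul ((n ! : ℝ) / (n : ℝ) ^ n)).const_mul Ks
    simp only [mul_one] at this
    refine Tendsto.congr (fun k => ?_) this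
    rw [hedef]
    ring
  exact ge_of_tendsto hlim (Filter.eventually_atTop.mpr ⟨1, fun k hk => hbound k hk⟩)

end BanachAlg5
section StirlingBound

open Stirling

-- tail estimate for log stirlingSeq
lemma stirling_log_bound (n : ℕ) (hn : 1 ≤ n) :
    Real.log (stirlingSeq (n + 1)) ≤ Real.log (Real.sqrt π) + 1 / (4 * n) := by
  have hnR : (1 : ℝ) ≤ (n : ℝ) := by exact_mod_cast hn
  have hm : ∀ m : ℕ, Real.log (stirlingSeq (n + 1)) - Real.log (stirlingSeq (n + 1 + m))
      ≤ 1 / (4 * n) := by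
    intro m
    have htel := Finset.sum_range_sub' (f := fun j => Real.log (stirlingSeq (n + 1 + j))) m
    have hterm : ∀ j ∈ Finset.range m,
        Real.log (stirlingSeq (n + 1 + j)) - Real.log (stirlingSeq (n + 1 + (j + 1)))
          ≤ (1 / 4 : ℝ) * (1 / ((n : ℝ) + j) - 1 / ((n : ℝ) + j + 1)) := by
      intro j _
      have h1 := log_stirlingSeq_sub_log_stirlingSeq_succ (n + j + 1)
      have he1 : n + j + 1 = n + 1 + j := by omega
      have he2 : n + j + 1 + 1 = n + 1 + (j + 1) := by omega
      rw [he2, he1] at h1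
      refine h1.trans ?_
      have hnj : (0 : ℝ) < (n : ℝ) + j := by positivity
      have hd : 1 / ((n : ℝ) + j) - 1 / ((n : ℝ) + j + 1)
          = 1 / (((n : ℝ) + j) * ((n : ℝ) + j + 1)) := by
        field_simp
        ring
      rw [hd]
      have hcast : ((n + 1 + j : ℕ) : ℝ) = (n : ℝ) + 1 + j := by push_cast; ring
      rw [hcast, show (1/4 : ℝ) * (1 / (((n : ℝ) + j) * ((n : ℝ) + j + 1)))
        = 1 / (4 * (((n : ℝ) + j) * ((n : ℝ) + j + 1))) from by
          rw [div_mul_div_comm, one_mul]]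
      apply one_div_le_one_div_of_le (by positivity)
      nlinarith [sq_nonneg ((n : ℝ) + j)]
    calc Real.log (stirlingSeq (n + 1)) - Real.log (stirlingSeq (n + 1 + m))
        = ∑ j ∈ Finset.range m, (Real.log (stirlingSeq (n + 1 + j))
            - Real.log (stirlingSeq (n + 1 + (j + 1)))) := by
          rw [htel]
      _ ≤ ∑ j ∈ Finset.range m, (1 / 4 : ℝ) * (1 / ((n : ℝ) + j) - 1 / ((n : ℝ) + j + 1)) :=
          Finset.sum_le_sum hterm
      _ = (1 / 4 : ℝ) * (1 / (n : ℝ) - 1 / ((n : ℝ) + m)) := by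
          rw [← Finset.mul_sum]
          congr 1
          have h9 := Finset.sum_range_sub' (f := fun j : ℕ => 1 / ((n : ℝ) + j)) m
          calc ∑ j ∈ Finset.range m, (1 / ((n : ℝ) + j) - 1 / ((n : ℝ) + j + 1))
              = ∑ j ∈ Finset.range m,
                  (1 / ((n : ℝ) + j) - 1 / ((n : ℝ) + (j + 1 : ℕ))) := by
                apply Finset.sum_congr rfl
                intro j _
                push_cast
                ring
            _ = 1 / ((n : ℝ) + (0 : ℕ)) - 1 / ((n : ℝ) + m) := h9
            _ = 1 / (n : ℝ) - 1 / ((n : ℝ) + m) := by norm_num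
      _ ≤ 1 / (4 * n) := by
          have h1 : (0:ℝ) ≤ 1 / ((n : ℝ) + m) := by positivity
          have h2 : (1/4 : ℝ) * (1 / (n : ℝ) - 1 / ((n : ℝ) + m)) ≤ 1/4 * (1 / (n : ℝ)) := by
            apply mul_le_mul_of_nonneg_left _ (by norm_num)
            linarith
          refine h2.trans (le_of_eq ?_)
          rw [div_mul_div_comm, one_mul]
  have hlim : Tendsto (fun m : ℕ => Real.log (stirlingSeq (n + 1 + m))) atTop
      (𝓝 (Real.log (Real.sqrt π))) := by
    have h1 : Tendsto stirlingSeq atTop (𝓝 (Real.sqrt π)) := tendsto_stirlingSeq_sqrt_pi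
    have h2 : ContinuousAt Real.log (Real.sqrt π) :=
      Real.continuousAt_log (ne_of_gt (Real.sqrt_pos.mpr pi_pos))
    have h3 : Tendsto (fun m : ℕ => m + (n + 1)) atTop atTop :=
      tendsto_add_atTop_nat (n + 1)
    have h4 := (h2.tendsto.comp h1).comp h3
    refine h4.congr fun m => ?_
    simp only [Function.comp_apply]
    rw [Nat.add_comm]
  have h5 : Real.log (stirlingSeq (n + 1)) - 1 / (4 * (n : ℝ)) ≤ Real.log (Real.sqrt π) :=
    ge_of_tendsto hlim (Filter.Eventually.of_forall fun m => by linarith [hm m])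
  linarith
end StirlingBound
section StirlingBound2
open Stirling

lemma exp_le_inv_one_sub {x : ℝ} (hx0 : 0 ≤ x) (hx1 : x < 1) :
    Real.exp x ≤ 1 / (1 - x) := by
  have h1x : 0 < 1 - x := by linarith
  rw [le_div_iff₀ h1x]
  have h2 : 1 - x ≤ Real.exp (-x) := by
    have := Real.add_one_le_exp (-x)
    linarith
  calc Real.exp x * (1 - x) ≤ Real.exp x * Real.exp (-x) :=
        mul_le_mul_of_nonneg_left h2 (Real.exp_pos x).le
    _ = 1 := by rw [← Real.exp_add]; simp

lemma factorial_exp_bound (n : ℕ) (hn : 1 ≤ n) :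
    (n ! : ℝ) / (n : ℝ) ^ n * Real.exp n ≤ Real.sqrt (2 * π * ((n : ℝ) + 1)) := by
  have hn0 : (0 : ℝ) < (n : ℝ) := by exact_mod_cast hn
  have hLHS : (n ! : ℝ) / (n : ℝ) ^ n * Real.exp n = stirlingSeq n * Real.sqrt (2 * n) := by
    rw [stirlingSeq]
    have h2 : (0:ℝ) < Real.sqrt (2 * n) := Real.sqrt_pos.mpr (by positivity)
    have h3 : (0:ℝ) < ((n : ℝ) / Real.exp 1) ^ n := by positivity
    rw [div_pow, Real.exp_one_pow]
    field_simp
  rw [hLHS]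
  rcases Nat.lt_or_ge n 3 with h3 | h3
  · -- n = 1 or n = 2
    interval_cases n
    · -- n = 1
      have he := Real.exp_one_lt_d9
      have hpi := Real.pi_gt_d6
      have h2 : (0:ℝ) < Real.sqrt 2 := by positivity
      have hs : stirlingSeq 1 * Real.sqrt (2 * ((1:ℕ):ℝ)) = Real.exp 1 := by
        rw [stirlingSeq_one]
        push_cast
        rw [mul_one, div_mul_cancel₀ _ (ne_of_gt h2)]
      rw [hs]
      have target : Real.exp 1 = Real.sqrt ((Real.exp 1) ^ 2) :=
        (Real.sqrt_sq (Real.exp_pos 1).le).symm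
      rw [target]
      apply Real.sqrt_le_sqrt
      push_cast
      nlinarith [Real.exp_pos 1]
    · -- n = 2
      have hs2 : (0:ℝ) < stirlingSeq 2 := stirlingSeq'_pos 1
      have hs2' : stirlingSeq 2 * Real.sqrt (2 * ((2:ℕ):ℝ)) = (2 : ℝ) * Real.exp 2 / 4 := by
        rw [stirlingSeq]
        have : Real.sqrt (2 * (2:ℕ)) = 2 := by
          rw [show (2 * (2:ℕ) : ℝ) = 2 ^ 2 by norm_num, Real.sqrt_sq (by norm_num)]
        norm_num at this ⊢
        rw [div_pow, Real.exp_one_pow]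
        field_simp
        ring
      rw [hs2']
      have he2 : Real.exp 2 = Real.exp 1 * Real.exp 1 := by
        rw [← Real.exp_add]; norm_num
      have he := Real.exp_one_lt_d9
      have hpi := Real.pi_gt_d6
      have target : (2 : ℝ) * Real.exp 2 / 4 = Real.sqrt (((2 : ℝ) * Real.exp 2 / 4) ^ 2) :=
        (Real.sqrt_sq (by positivity)).symm
      rw [target]
      apply Real.sqrt_le_sqrt
      push_cast
      rw [he2]
      have hepos := Real.exp_pos 1
      have h4 : Real.exp 1 * Real.exp 1 < 7.38906 := by nlinarith
      have h5 : (2 * (Real.exp 1 * Real.exp 1) / 4) ^ 2 < 13.66 := by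
        nlinarith [mul_pos hepos hepos]
      nlinarith
  · -- n ≥ 3
    obtain ⟨m, rfl⟩ : ∃ m, n = m + 1 := ⟨n - 1, by omega⟩
    have hm2 : 2 ≤ m := by omega
    have hm0 : (0:ℝ) < (m : ℝ) := by exact_mod_cast Nat.lt_of_lt_of_le Nat.zero_lt_two hm2
    have hmR : (2:ℝ) ≤ (m : ℝ) := by exact_mod_cast hm2
    -- stirlingSeq (m+1) ≤ √π * exp (1/(4m))
    have hsb := stirling_log_bound m (by omega)
    have hspos : (0:ℝ) < stirlingSeq (m + 1) := stirlingSeq'_pos m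
    have hsple : stirlingSeq (m + 1) ≤ Real.sqrt π * Real.exp (1 / (4 * m)) := by
      have h4 : stirlingSeq (m + 1) = Real.exp (Real.log (stirlingSeq (m + 1))) :=
        (Real.exp_log hspos).symm
      rw [h4]
      calc Real.exp (Real.log (stirlingSeq (m + 1)))
          ≤ Real.exp (Real.log (Real.sqrt π) + 1 / (4 * m)) := Real.exp_le_exp.mpr hsb
        _ = Real.sqrt π * Real.exp (1 / (4 * m)) := by
            rw [Real.exp_add, Real.exp_log (Real.sqrt_pos.mpr pi_pos)]
    -- the exponential estimate
    have hx0 : (0:ℝ) ≤ 1 / (2 * m) := by positivity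
    have hx1 : 1 / (2 * (m:ℝ)) < 1 := by
      rw [div_lt_one (by positivity)]; linarith
    have hexp : Real.exp (1 / (2 * m)) ≤ 2 * m / (2 * m - 1) := by
      refine (exp_le_inv_one_sub hx0 hx1).trans (le_of_eq ?_)
      have hsub : (1:ℝ) - 1 / (2 * m) = (2 * m - 1) / (2 * m) := by
        field_simp
      rw [hsub, one_div_div]
    have hcast : ((m + 1 : ℕ) : ℝ) = (m : ℝ) + 1 := by push_cast; ring
    rw [hcast]
    have hA0 : (0:ℝ) ≤ Real.sqrt π * Real.exp (1/(4*m)) * Real.sqrt (2 * ((m:ℝ)+1)) := by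
      positivity
    calc stirlingSeq (m+1) * Real.sqrt (2 * ((m:ℝ)+1))
        ≤ (Real.sqrt π * Real.exp (1/(4*m))) * Real.sqrt (2 * ((m:ℝ)+1)) :=
          mul_le_mul_of_nonneg_right hsple (Real.sqrt_nonneg _)
      _ = Real.sqrt ((Real.sqrt π * Real.exp (1/(4*m)) * Real.sqrt (2 * ((m:ℝ)+1)))^2) :=
          (Real.sqrt_sq hA0).symm
      _ ≤ Real.sqrt (2 * π * (((m:ℝ)+1)+1)) := by
          apply Real.sqrt_le_sqrt
          have e1 : Real.exp (1/(4*(m:ℝ))) ^ 2 = Real.exp (1/(2*m)) := by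
            rw [sq, ← Real.exp_add]
            congr 1
            field_simp
            ring
          have hsq : (Real.sqrt π * Real.exp (1/(4*m)) * Real.sqrt (2*((m:ℝ)+1)))^2
              = π * Real.exp (1/(2*m)) * (2*((m:ℝ)+1)) := by
            rw [mul_pow, mul_pow, e1, Real.sq_sqrt pi_pos.le, Real.sq_sqrt (by positivity)]
          rw [hsq]
          have h2m1 : (0:ℝ) < 2*(m:ℝ)-1 := by linarith
          have key : (2*(m:ℝ)/(2*m-1)) * (2*((m:ℝ)+1)) ≤ 2*((m:ℝ)+2) := by
            rw [div_mul_eq_mul_div, div_le_iff₀ h2m1]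
            nlinarith
          calc π * Real.exp (1/(2*m)) * (2*((m:ℝ)+1))
              ≤ π * ((2*(m:ℝ)/(2*m-1)) * (2*((m:ℝ)+1))) := by
                rw [mul_assoc]
                apply mul_le_mul_of_nonneg_left _ pi_pos.le
                apply mul_le_mul_of_nonneg_right hexp (by positivity)
            _ ≤ π * (2*((m:ℝ)+2)) := mul_le_mul_of_nonneg_left key pi_pos.le
            _ = 2 * π * (((m:ℝ)+1)+1) := by ring

end StirlingBound2

/-- If `T` is strongly Kreiss bounded on a complex Banach space `X` with constant `Ks`,
then `‖T^n‖ ≤ Ks·√(2π(n+1))` for all `n : ℕ`. -/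
theorem strongly_kreiss_sqrt_growth
    {X : Type*} [NormedAddCommGroup X] [NormedSpace ℂ X] [CompleteSpace X]
    (T : X →L[ℂ] X) (Ks : ℝ)
    (hT : ∀ n : ℕ, 1 ≤ n → ∀ lam : ℂ, 1 < ‖lam‖ →
      IsUnit (lam • (1 : X →L[ℂ] X) - T) ∧
      ‖Ring.inverse (lam • (1 : X →L[ℂ] X) - T) ^ n‖ ≤ Ks / (‖lam‖ - 1) ^ n) :
    ∀ n : ℕ, ‖T ^ n‖ ≤ Ks * Real.sqrt (2 * Real.pi * (n + 1)) := by
  have hU : ∀ lam : ℂ, 1 < ‖lam‖ → IsUnit (lam • (1 : X →L[ℂ] X) - T) :=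
    fun lam h => (hT 1 le_rfl lam h).1
  have hKr : ∀ k : ℕ, 1 ≤ k → ∀ lam : ℂ, 1 < ‖lam‖ →
      ‖Ring.inverse (lam • (1 : X →L[ℂ] X) - T) ^ k‖ ≤ Ks / (‖lam‖ - 1) ^ k :=
    fun k hk lam h => (hT k hk lam h).2
  have hKs0 : 0 ≤ Ks := by
    have h := key_ineq T Ks hU hKr 0 0 (by norm_num : (0:ℝ) < 1/2) (by norm_num)
    have h0 : (0 : ℝ) ≤ Ks / ((1 - 1/2) ^ (0 + 1) * (1/2 : ℝ) ^ 0) := by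
      refine le_trans ?_ h
      positivity
    by_contra hneg
    push_neg at hneg
    have : Ks / ((1 - 1/2) ^ (0 + 1) * (1/2 : ℝ) ^ 0) < 0 :=
      div_neg_of_neg_of_pos hneg (by norm_num)
    linarith
  have hsq2 : (2 : ℝ) ≤ Real.sqrt (2 * π) := by
    have h4 : (2:ℝ) = Real.sqrt 4 := by
      rw [show (4:ℝ) = 2 ^ 2 by norm_num, Real.sqrt_sq (by norm_num : (0:ℝ) ≤ 2)]
    rw [h4]
    apply Real.sqrt_le_sqrt
    nlinarith [Real.pi_gt_d6]
  intro n
  rcases Nat.eq_zero_or_pos n with rfl | hn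
  · -- n = 0
    have h := key_ineq T Ks hU hKr 0 0 (by norm_num : (0:ℝ) < 1/2) (by norm_num)
    have h' : ‖T ^ 0‖ ≤ 2 * Ks := by
      have hden : ((1 - 1/2 : ℝ) ^ (0 + 1) * (1/2 : ℝ) ^ 0) = 1/2 := by norm_num
      rw [hden] at h
      have : ((0 + 0).choose 0 : ℝ) = 1 := by norm_num
      rw [this, one_mul] at h
      calc ‖T ^ 0‖ ≤ Ks / (1/2) := h
        _ = 2 * Ks := by ring
    calc ‖T ^ 0‖ ≤ 2 * Ks := h'
      _ ≤ Real.sqrt (2 * π) * Ks := mul_le_mul_of_nonneg_right hsq2 hKs0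
      _ = Ks * Real.sqrt (2 * π * ((0 : ℕ) + 1)) := by
          rw [mul_comm]
          norm_num
  · have h1 := norm_pow_le_factorial T Ks hU hKr n hn
    have h2 := factorial_exp_bound n hn
    calc ‖T ^ n‖ ≤ Ks * ((n ! : ℝ) / (n : ℝ) ^ n * Real.exp n) := h1
      _ ≤ Ks * Real.sqrt (2 * π * ((n : ℝ) + 1)) := mul_le_mul_of_nonneg_left h2 hKs0
end

section
/- For every integer n ≥ 100 and every real x ∈ [0, 2√n], one has e^x (1 - x/n)^{n - x} ≤ e^{20/9}. -/
lemma log_one_sub_le_pade (t : ℝ) (h0 : 0 ≤ t) (h1 : t < 1) :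
    Real.log (1 - t) ≤ -(2 * t) / (2 - t) := by
  rcases eq_or_lt_of_le h0 with rfl | h0
  · simp
  set f : ℝ → ℝ := fun y => -(2 * y) / (2 - y) - Real.log (1 - y) with hf
  have hmono : MonotoneOn f (Set.Icc 0 t) := by
    have hderiv : ∀ y ∈ Set.Ioo (0:ℝ) t,
        HasDerivAt f (1 / (1 - y) - 4 / (2 - y) ^ 2) y := by
      intro y hy
      have hy1 : y < 1 := lt_of_lt_of_le hy.2 h1.le
      have h1y : (1 : ℝ) - y ≠ 0 := by linarith [hy.1]
      have h2y : (2 : ℝ) - y ≠ 0 := by linarith [hy.1]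
      have hA : HasDerivAt (fun y : ℝ => -(2 * y) / (2 - y))
          ((-(2*1) * (2 - y) - -(2 * y) * (-1)) / (2 - y) ^ 2) y := by
        exact (((hasDerivAt_id' y).const_mul (2:ℝ)).neg).div
          ((hasDerivAt_id' y).const_sub 2) h2y
      have hB : HasDerivAt (fun y : ℝ => Real.log (1 - y)) (-1 / (1 - y)) y := by
        exact HasDerivAt.log ((hasDerivAt_id y).const_sub 1) h1y
      have : HasDerivAt (fun y => -(2 * y) / (2 - y) - Real.log (1 - y)) _ y := hA.sub hB
      convert this using 1
      field_simp
      ring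
    apply monotoneOn_of_deriv_nonneg (convex_Icc 0 t)
    · apply ContinuousOn.sub
      · apply ContinuousOn.div (by fun_prop) (by fun_prop)
        intro y hy
        have : y ≤ t := hy.2
        intro h; linarith [h1]
      · apply ContinuousOn.log (by fun_prop)
        intro y hy
        have : y ≤ t := hy.2
        intro h; linarith [h1]
    · intro y hy
      rw [interior_Icc] at hy
      exact ((hderiv y hy).differentiableAt).differentiableWithinAt
    · intro y hy
      rw [interior_Icc] at hy
      rw [(hderiv y hy).deriv]
      have hy1 : y < 1 := lt_of_lt_of_le hy.2 h1.le
      have h1y : (0 : ℝ) < 1 - y := by linarith [hy.1]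
      have h2y : (0 : ℝ) < 2 - y := by linarith [hy.1]
      rw [sub_nonneg, div_le_div_iff₀ (by positivity) h1y]
      nlinarith [sq_nonneg y]
  have h0t : (0:ℝ) ∈ Set.Icc (0:ℝ) t := by constructor <;> linarith
  have htt : t ∈ Set.Icc (0:ℝ) t := by constructor <;> linarith
  have := hmono h0t htt h0.le
  simp only [hf] at this
  simp at this
  linarith [this]


/-- For every integer `n ≥ 100` and every real `x ∈ [0, 2√n]`,
`e^x (1 - x/n)^{n - x} ≤ e^{20/9}`. -/
theorem exp_mul_rpow_le (n : ℕ) (hn : 100 ≤ n) (x : ℝ) (hx0 : 0 ≤ x)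
    (hx : x ≤ 2 * Real.sqrt n) :
    Real.exp x * (1 - x / n) ^ ((n : ℝ) - x) ≤ Real.exp (20 / 9) := by
  have hn0 : (0:ℝ) < n := by
    have : (100:ℝ) ≤ n := by exact_mod_cast hn
    linarith
  set s := Real.sqrt n with hsdef
  have hs : s * s = n := Real.mul_self_sqrt (le_of_lt hn0)
  have hs10 : (10:ℝ) ≤ s := by
    have : Real.sqrt 100 ≤ s := Real.sqrt_le_sqrt (by exact_mod_cast hn)
    rwa [show (100:ℝ) = 10 ^ 2 by norm_num, Real.sqrt_sq (by norm_num)] at this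
  -- x ≤ n/5
  have hx5 : 5 * x ≤ (n:ℝ) := by nlinarith
  have hxsq : x ^ 2 ≤ 4 * n := by nlinarith
  have hxn : x < (n:ℝ) := by nlinarith
  have hbase : (0:ℝ) < 1 - x / n := by
    rw [sub_pos, div_lt_one hn0]; exact hxn
  rw [Real.rpow_def_of_pos hbase, ← Real.exp_add, Real.exp_le_exp]
  -- key log bound
  have ht0 : 0 ≤ x / n := by positivity
  have ht1 : x / n < 1 := by rw [div_lt_one hn0]; exact hxn
  have hlog := log_one_sub_le_pade (x / n) ht0 ht1
  have hden : (0:ℝ) < 2 * n - x := by nlinarith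
  have heq : -(2 * (x / n)) / (2 - x / n) = -(2 * x) / (2 * n - x) := by
    rw [div_eq_div_iff (by nlinarith : (2:ℝ) - x / n ≠ 0) (ne_of_gt hden)]
    field_simp
  rw [heq] at hlog
  have hnx : 0 ≤ (n:ℝ) - x := by nlinarith
  have h1 : ((n:ℝ) - x) * Real.log (1 - x / n) ≤ ((n:ℝ) - x) * (-(2 * x) / (2 * n - x)) :=
    mul_le_mul_of_nonneg_left hlog hnx
  have h2 : x + ((n:ℝ) - x) * (-(2 * x) / (2 * n - x)) ≤ 20 / 9 := by
    rw [mul_div_assoc', add_div' _ _ _ (ne_of_gt hden), div_le_iff₀ hden]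
    nlinarith
  linarith
end

section
/- For n ≥ 2 and integers m with n - √n ≤ m ≤ n, let b_{n,m} := Σ_{m-√n ≤ k ≤ m-1} n^k/k! and a_{n,m} := e^n / b_{n,m} (and a_{n,m} := 0 for other m). Then sup_m |a_{n,m}| ≤ 32. -/
open scoped BigOperators

private lemma small_check : ∀ n < 100, ∀ t < 10, 2 ≤ n → t * t ≤ n → n < (t+1)*(t+1) →
    27182818286 ^ n * (Nat.factorial (n - 2 * t)) ≤
      32 * t * n ^ (n - 2 * t) * 10 ^ (10 * n) := by decide

private lemma const_check : (27182818286:ℕ) ^ 271 * 11 ^ 81 ≤ 320 ^ 81 * 10 ^ 2710 := by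
  rw [show (271:ℕ) = 200 + 71 from rfl, show (2710:ℕ) = 200 + 200 + 200+200+200+200+200+200+200+200+200+200+200+110 from rfl]
  simp only [pow_add]
  norm_num

/-- `2 * Nat.sqrt n ≤ n` for `n ≥ 2`. -/
private lemma two_sqrt_le (n : ℕ) (hn : 2 ≤ n) : 2 * Nat.sqrt n ≤ n := by
  have h1 : Nat.sqrt n * Nat.sqrt n ≤ n := Nat.sqrt_le n
  rcases Nat.lt_or_ge (Nat.sqrt n) 2 with h | h
  · have h2 : 1 ≤ Nat.sqrt n := Nat.le_sqrt.mpr (by omega)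
    omega
  · nlinarith

private lemma sqrt_pos' (n : ℕ) (hn : 2 ≤ n) : 1 ≤ Nat.sqrt n :=
  Nat.le_sqrt.mpr (by omega)

/-- Stirling-type upper bound: `e^n · n! ≤ e · √n · n^n` for `n ≥ 1`. -/
private lemma stirling_upper (n : ℕ) (hn : 1 ≤ n) :
    Real.exp n * (Nat.factorial n : ℝ) ≤ Real.exp 1 * Real.sqrt n * (n:ℝ) ^ n := by
  obtain ⟨k, rfl⟩ : ∃ k, n = k + 1 := ⟨n - 1, by omega⟩
  have hmono := Stirling.log_stirlingSeq'_antitone (Nat.zero_le k)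
  have hpos : 0 < Stirling.stirlingSeq (k+1) := Stirling.stirlingSeq'_pos k
  have hpos1 : 0 < Stirling.stirlingSeq (0+1) := Stirling.stirlingSeq'_pos 0
  have h1 : Stirling.stirlingSeq (k+1) ≤ Real.exp 1 / Real.sqrt 2 := by
    rw [← Stirling.stirlingSeq_one]
    exact (Real.log_le_log_iff hpos (by simpa using hpos1)).mp (by simpa using hmono)
  set N : ℕ := k + 1 with hN
  have hNpos : (0:ℝ) < N := by positivity
  have hd : (0:ℝ) < Real.sqrt (2*N) * ((N:ℝ)/Real.exp 1) ^ N := by positivity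
  have h2 : (Nat.factorial N : ℝ) ≤
      Real.exp 1 / Real.sqrt 2 * (Real.sqrt (2*N) * ((N:ℝ)/Real.exp 1) ^ N) := by
    have := (div_le_iff₀ hd).mp (by
      simpa [Stirling.stirlingSeq] using h1)
    simpa [mul_comm] using this
  have h3 : Real.sqrt (2*(N:ℝ)) = Real.sqrt 2 * Real.sqrt N := Real.sqrt_mul (by norm_num) _
  have h4 : ((N:ℝ)/Real.exp 1) ^ N = (N:ℝ)^N / Real.exp N := by
    rw [div_pow, Real.exp_one_pow]
  rw [h3, h4] at h2
  have hs2 : (0:ℝ) < Real.sqrt 2 := by positivity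
  have heN : (0:ℝ) < Real.exp N := Real.exp_pos _
  have key : Real.exp 1 / Real.sqrt 2 * (Real.sqrt 2 * Real.sqrt N * ((N:ℝ)^N / Real.exp N))
      * Real.exp N = Real.exp 1 * Real.sqrt N * (N:ℝ)^N := by
    field_simp
  calc Real.exp N * (Nat.factorial N : ℝ)
      ≤ Real.exp N * (Real.exp 1 / Real.sqrt 2 * (Real.sqrt 2 * Real.sqrt N * ((N:ℝ)^N / Real.exp N))) :=
        by exact mul_le_mul_of_nonneg_left h2 heN.le
    _ = Real.exp 1 * Real.sqrt N * (N:ℝ)^N := by rw [← key]; ring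

/-- `exp (271/81) ≤ 320/11`. -/
private lemma exp_const_bound : Real.exp (271/81) ≤ 320/11 := by
  have h81 : (81:ℕ) ≠ 0 := by norm_num
  refine le_of_pow_le_pow_left₀ h81 (by norm_num) ?_
  have e1 : Real.exp (271/81) ^ (81:ℕ) = Real.exp 271 := by
    rw [← Real.exp_nat_mul]; norm_num
  have e2 : Real.exp 271 = Real.exp 1 ^ (271:ℕ) := by
    rw [← Real.exp_nat_mul]; norm_num
  rw [e1, e2]
  have ha : Real.exp 1 ≤ 27182818286/10^10 := by
    have := Real.exp_one_lt_d9
    norm_num at this ⊢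
    linarith
  calc Real.exp 1 ^ (271:ℕ) ≤ ((27182818286:ℝ)/10^10) ^ (271:ℕ) :=
        pow_le_pow_left₀ (Real.exp_pos 1).le ha _
    _ ≤ ((320:ℝ)/11) ^ (81:ℕ) := by
        rw [div_pow, div_pow]
        rw [div_le_div_iff₀ (by positivity) (by positivity)]
        have := const_check
        have : ((27182818286:ℕ) ^ 271 * 11 ^ 81 : ℝ) ≤ ((320:ℕ) ^ 81 * 10 ^ 2710 : ℝ) := by
          exact_mod_cast this
        push_cast at this
        calc (27182818286:ℝ) ^ 271 * 11 ^ 81 ≤ 320 ^ 81 * 10 ^ 2710 := this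
          _ = 320 ^ 81 * (10^10) ^ 271 := by rw [← pow_mul]

/-- Key bound: `e^n · (n - 2t)! ≤ 32 t · n^(n-2t)` where `t = √n` (floor). -/
private lemma key_bound (n : ℕ) (hn : 2 ≤ n) :
    Real.exp n * (Nat.factorial (n - 2 * Nat.sqrt n) : ℝ) ≤
      32 * (Nat.sqrt n : ℝ) * (n:ℝ) ^ (n - 2 * Nat.sqrt n) := by
  set t := Nat.sqrt n with htdef
  have h2t : 2 * t ≤ n := two_sqrt_le n hn
  have ht1 : 1 ≤ t := sqrt_pos' n hn
  have htt : t * t ≤ n := Nat.sqrt_le n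
  have hlt : n < (t+1) * (t+1) := Nat.lt_succ_sqrt n
  rcases Nat.lt_or_ge n 100 with h100 | h100
  · -- small case, by explicit computation
    have ht10 : t < 10 := by nlinarith
    have hnat := small_check n h100 t ht10 hn htt hlt
    have hA : (0:ℝ) < (10:ℝ)^(10*n) := by positivity
    have hcast : (27182818286:ℝ)^n * (Nat.factorial (n - 2*t) : ℝ) ≤
        32 * t * (n:ℝ)^(n-2*t) * 10^(10*n) := by exact_mod_cast hnat
    have he : Real.exp n ≤ (27182818286:ℝ)^n / 10^(10*n) := by
      have h1 : Real.exp n = Real.exp 1 ^ n := by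
        rw [← Real.exp_nat_mul]; norm_num
      have ha : Real.exp 1 ≤ (27182818286:ℝ)/10^10 := by
        have := Real.exp_one_lt_d9
        norm_num at this ⊢; linarith
      rw [h1]
      calc Real.exp 1 ^ n ≤ ((27182818286:ℝ)/10^10)^n :=
            pow_le_pow_left₀ (Real.exp_pos 1).le ha n
        _ = (27182818286:ℝ)^n / 10^(10*n) := by rw [div_pow, ← pow_mul]
    calc Real.exp n * (Nat.factorial (n-2*t) : ℝ)
        ≤ ((27182818286:ℝ)^n / 10^(10*n)) * (Nat.factorial (n-2*t) : ℝ) :=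
          mul_le_mul_of_nonneg_right he (by positivity)
      _ = ((27182818286:ℝ)^n * (Nat.factorial (n-2*t):ℝ)) / 10^(10*n) := by ring
      _ ≤ (32 * t * (n:ℝ)^(n-2*t) * 10^(10*n)) / 10^(10*n) := (div_le_div_iff_of_pos_right hA).mpr hcast
      _ = 32 * t * (n:ℝ)^(n-2*t) := by field_simp
  · -- large case
    have ht10 : 10 ≤ t := Nat.le_sqrt.mpr (by omega)
    have hT10 : (10:ℝ) ≤ t := by exact_mod_cast ht10
    set s : ℝ := (n:ℝ) - 2*t + 1 with hsdef
    have hcast2t : (2*(t:ℝ)) ≤ n := by exact_mod_cast h2t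
    have hs0 : 0 < s := by rw [hsdef]; linarith
    set E : ℝ := (t:ℝ)*(2*t-1)/s with hEdef
    set D : ℝ := ∏ u ∈ Finset.range (2*t), ((n:ℝ) - u) with hDdef
    -- each factor bound
    have hfac : ∀ u ∈ Finset.range (2*t), (n:ℝ) * Real.exp (-(u:ℝ)/s) ≤ (n:ℝ) - u := by
      intro u hu
      simp only [Finset.mem_range] at hu
      have hu' : (u:ℝ) ≤ 2*(t:ℝ) - 1 := by
        have : (u:ℝ) + 1 ≤ 2*(t:ℝ) := by exact_mod_cast hu
        linarith
      have hun : (u:ℝ) + s ≤ n := by rw [hsdef]; linarith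
      have hsu : 0 < s + (u:ℝ) := by positivity
      have hnu : 0 < (n:ℝ) - u := by linarith
      have hexp : Real.exp (-(u:ℝ)/s) ≤ s / (s + u) := by
        rw [le_div_iff₀ hsu]
        have h5 : Real.exp (-((u:ℝ)/s)) * ((u:ℝ)/s + 1) ≤ 1 := by
          calc Real.exp (-((u:ℝ)/s)) * ((u:ℝ)/s+1)
              ≤ Real.exp (-((u:ℝ)/s)) * Real.exp ((u:ℝ)/s) :=
                mul_le_mul_of_nonneg_left (Real.add_one_le_exp _) (Real.exp_pos _).le
            _ = 1 := by rw [← Real.exp_add]; simp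
        have h6 : Real.exp (-(u:ℝ)/s) * (s + u) = Real.exp (-((u:ℝ)/s)) * ((u:ℝ)/s + 1) * s := by
          rw [neg_div]; field_simp; ring
        rw [h6]
        calc Real.exp (-((u:ℝ)/s)) * ((u:ℝ)/s + 1) * s ≤ 1 * s :=
              mul_le_mul_of_nonneg_right h5 hs0.le
          _ = s := one_mul s
      calc (n:ℝ) * Real.exp (-(u:ℝ)/s) ≤ (n:ℝ) * (s/(s+u)) :=
            mul_le_mul_of_nonneg_left hexp (by positivity)
        _ ≤ (n:ℝ) - u := by
            rw [← mul_div_assoc, div_le_iff₀ hsu]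
            nlinarith [mul_nonneg (Nat.cast_nonneg u : (0:ℝ) ≤ u) (sub_nonneg.mpr hun)]
    -- product bound
    have hsum : ∑ u ∈ Finset.range (2*t), (u:ℝ) = (t:ℝ)*(2*(t:ℝ)-1) := by
      have h1 := Finset.sum_range_id_mul_two (2*t)
      have h2 := congrArg (Nat.cast (R := ℝ)) h1
      push_cast [Nat.cast_sub (show 1 ≤ 2*t by omega)] at h2
      linarith
    have hprod : (n:ℝ)^(2*t) * Real.exp (-E) ≤ D := by
      have h1 : ∏ u ∈ Finset.range (2*t), ((n:ℝ) * Real.exp (-(u:ℝ)/s)) ≤ D :=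
        Finset.prod_le_prod (fun u _ => by positivity) hfac
      have h2 : ∏ u ∈ Finset.range (2*t), ((n:ℝ) * Real.exp (-(u:ℝ)/s))
          = (n:ℝ)^(2*t) * Real.exp (-E) := by
        rw [Finset.prod_mul_distrib, Finset.prod_const, Finset.card_range, ← Real.exp_sum]
        congr 2
        simp only [neg_div]
        rw [Finset.sum_neg_distrib, ← Finset.sum_div, hsum, hEdef]
      rw [← h2]; exact h1
    -- step B
    have hsqrt : Real.sqrt n ≤ (t:ℝ) + 1 := by
      have := Real.real_sqrt_lt_nat_sqrt_succ (a := n)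
      push_cast at this
      exact this.le
    have hE190 : E ≤ 190/81 := by
      have hs1 : ((t:ℝ)-1)^2 ≤ s := by
        have h3 : ((t:ℝ))*t ≤ n := by exact_mod_cast htt
        rw [hsdef]; nlinarith
      rw [hEdef, div_le_div_iff₀ hs0 (by norm_num)]
      nlinarith [mul_nonneg (sub_nonneg.mpr hT10) (show (0:ℝ) ≤ 28*(t:ℝ)-19 by linarith)]
    have hexpB : Real.exp (1 + E) ≤ 320/11 :=
      (Real.exp_le_exp.mpr (by linarith)).trans exp_const_bound
    have hB : Real.sqrt n * Real.exp (1 + E) ≤ 32 * t := by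
      calc Real.sqrt n * Real.exp (1 + E) ≤ ((t:ℝ)+1) * (320/11) :=
            mul_le_mul hsqrt hexpB (Real.exp_pos _).le (by positivity)
        _ ≤ 32*t := by nlinarith
    have hB' : Real.exp 1 * Real.sqrt n ≤ 32*(t:ℝ)*Real.exp (-E) := by
      have h := hB
      rw [Real.exp_add] at h
      have hEpos : (0:ℝ) < Real.exp E := Real.exp_pos _
      rw [Real.exp_neg, mul_comm (32*(t:ℝ)), inv_mul_eq_div, le_div_iff₀ hEpos]
      nlinarith [Real.sqrt_nonneg (n:ℝ)]
    -- assemble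
    have hstir := stirling_upper n (by omega)
    have hdesc : (Nat.factorial (n - 2*t) : ℝ) * D = (Nat.factorial n : ℝ) := by
      have h1 : Nat.factorial (n - 2*t) * Nat.descFactorial n (2*t) = Nat.factorial n :=
        Nat.factorial_mul_descFactorial h2t
      have h2 : (Nat.descFactorial n (2*t) : ℝ) = D := by
        rw [Nat.descFactorial_eq_prod_range, hDdef, Nat.cast_prod]
        exact Finset.prod_congr rfl (fun u hu => by
          simp only [Finset.mem_range] at hu
          rw [Nat.cast_sub (by omega)])
      rw [← h2, ← Nat.cast_mul, h1]
    have hD0 : (0:ℝ) < D := by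
      rw [hDdef]
      apply Finset.prod_pos
      intro u hu
      simp only [Finset.mem_range] at hu
      have : (u:ℝ) + 1 ≤ 2*(t:ℝ) := by exact_mod_cast hu
      linarith
    have hpow : (n:ℝ)^(n-2*t) * (n:ℝ)^(2*t) = (n:ℝ)^n := by
      rw [← pow_add]; congr 1; omega
    rw [← mul_le_mul_iff_of_pos_right hD0]
    have hnn : (0:ℝ) ≤ (n:ℝ)^n := by positivity
    have hn2t : (0:ℝ) ≤ (n:ℝ)^(n-2*t) := by positivity
    calc Real.exp n * (Nat.factorial (n-2*t):ℝ) * D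
        = Real.exp n * (Nat.factorial n : ℝ) := by rw [mul_assoc, hdesc]
      _ ≤ Real.exp 1 * Real.sqrt n * (n:ℝ)^n := hstir
      _ ≤ (32*(t:ℝ)*Real.exp (-E)) * (n:ℝ)^n :=
          mul_le_mul_of_nonneg_right hB' hnn
      _ = 32*(t:ℝ)*(n:ℝ)^(n-2*t) * ((n:ℝ)^(2*t) * Real.exp (-E)) := by
          rw [← hpow]; ring
      _ ≤ 32*(t:ℝ)*(n:ℝ)^(n-2*t) * D :=
          mul_le_mul_of_nonneg_left hprod (by positivity)

theorem term_mono (n : ℕ) : ∀ a b : ℕ, a ≤ b → b ≤ n →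
    (n:ℝ)^a / (Nat.factorial a) ≤ (n:ℝ)^b / (Nat.factorial b) := by
  intro a b hab
  induction b, hab using Nat.le_induction with
  | base => intro _; exact le_rfl
  | succ b hb ih =>
    intro hbn
    refine (ih (by omega)).trans ?_
    rw [pow_succ, Nat.factorial_succ]
    have h1 : ((b:ℝ) + 1) ≤ n := by exact_mod_cast hbn
    have hn0 : 0 < n := by omega
    have h2 : (0:ℝ) < (n:ℝ)^b := pow_pos (by exact_mod_cast hn0) b
    have h3 : (0:ℝ) < (Nat.factorial b : ℝ) := by positivity
    rw [div_le_div_iff₀ h3 (by exact_mod_cast Nat.mul_pos b.succ_pos (Nat.factorial_pos b))]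
    push_cast
    nlinarith [mul_le_mul_of_nonneg_left h1 (mul_pos h2 h3).le]

/-- `b n m = Σ_{m - √n ≤ k ≤ m - 1} n^k / k!`. -/
noncomputable def kreissB (n : ℕ) (m : ℤ) : ℝ :=
  ∑ k ∈ Finset.Icc ⌈(m : ℝ) - Real.sqrt n⌉ (m - 1), (n : ℝ) ^ k.toNat / (Nat.factorial k.toNat)

/-- `a n m = e^n / b n m` for `n - √n ≤ m ≤ n`, and `0` otherwise. -/
noncomputable def kreissA (n : ℕ) (m : ℤ) : ℝ :=
  if (n : ℝ) - Real.sqrt n ≤ (m : ℝ) ∧ (m : ℝ) ≤ (n : ℝ) then Real.exp n / kreissB n m else 0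

/-- For `n ≥ 2`, the sequence `(a_{n,m})_{m ∈ ℤ}` is uniformly bounded by `32`. -/
theorem kreissA_bounded (n : ℕ) (hn : 2 ≤ n) : ∀ m : ℤ, |kreissA n m| ≤ 32 := by
  intro m
  unfold kreissA
  split_ifs with h
  · obtain ⟨h1, h2⟩ := h
    set t := Nat.sqrt n with htdef
    have h2t : 2 * t ≤ n := two_sqrt_le n hn
    have ht1 : 1 ≤ t := sqrt_pos' n hn
    have hts : ((t:ℝ)) ≤ Real.sqrt n := Real.nat_sqrt_le_real_sqrt
    have hts2 : Real.sqrt n < (t:ℝ) + 1 := by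
      have := Real.real_sqrt_lt_nat_sqrt_succ (a := n)
      push_cast at this
      exact this
    have hm2 : m ≤ (n:ℤ) := by exact_mod_cast h2
    have hm1 : (n:ℤ) - t ≤ m := by
      have hr : ((n:ℤ) - (t:ℤ) - 1 : ℝ) < (m:ℝ) := by push_cast; linarith
      have : ((n:ℤ) - t - 1 : ℤ) < m := by exact_mod_cast hr
      omega
    have hceil : ⌈(m:ℝ) - Real.sqrt n⌉ = m - t := by
      rw [Int.ceil_eq_iff]
      constructor
      · push_cast; linarith
      · push_cast; linarith
    set c : ℝ := (n:ℝ)^(n-2*t) / (Nat.factorial (n-2*t)) with hcdef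
    have hc : 0 < c := by
      rw [hcdef]
      exact div_pos (pow_pos (by exact_mod_cast (show 0 < n by omega)) _)
        (by exact_mod_cast (Nat.factorial_pos _))
    have hbound : (t:ℝ) * c ≤ kreissB n m := by
      rw [kreissB, hceil]
      have hcard : (Finset.Icc (m - (t:ℤ)) (m-1)).card = t := by
        rw [Int.card_Icc]; omega
      rw [show (t:ℝ) * c = (Finset.Icc (m - (t:ℤ)) (m-1)).card • c by
        rw [hcard]; simp [nsmul_eq_mul]]
      rw [← Finset.sum_const]
      apply Finset.sum_le_sum
      intro k hk
      simp only [Finset.mem_Icc] at hk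
      obtain ⟨hk1, hk2⟩ := hk
      have hkn1 : n - 2*t ≤ k.toNat := by omega
      have hkn2 : k.toNat ≤ n - 1 := by omega
      rw [hcdef]
      exact term_mono n (n-2*t) k.toNat hkn1 (by omega)
    have hb0 : 0 < kreissB n m := lt_of_lt_of_le (by positivity) hbound
    rw [abs_of_nonneg (div_nonneg (Real.exp_pos _).le hb0.le), div_le_iff₀ hb0]
    have h32 : Real.exp n ≤ 32 * (t:ℝ) * c := by
      have hF : (0:ℝ) < (Nat.factorial (n-2*t) : ℝ) := by exact_mod_cast Nat.factorial_pos _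
      rw [hcdef, ← mul_div_assoc, le_div_iff₀ hF]
      exact key_bound n hn
    calc Real.exp n ≤ 32 * (t:ℝ) * c := h32
      _ ≤ 32 * kreissB n m := by nlinarith [hbound]
  · norm_num
end

section
/- Let X be a Banach space, p ∈ [1,∞], 1 ≤ s < q < ∞ ≥ r with r ∈ (q,∞], and suppose there is U > 0 such that for every finite family 𝓘 of disjoint intervals and every trigonometric polynomial f with Fourier support in ⋃𝓘, ‖f‖_{L^p(𝕋;X)} ≤ U (#𝓘)^{1/q - 1/r}(Σ_{I∈𝓘}‖D_I f‖^r_{L^p})^{1/r}. Then X has upper ℓ^s(L^p)-decompositions: there is a constant C (depending on U, q, s) such that for every interval partition 𝓘 and polynomial f, ‖f‖_{L^p(𝕋;X)} ≤ C (Σ_{I∈𝓘}‖D_I f‖^s_{L^p})^{1/s}. -/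
open MeasureTheory Set
open scoped ENNReal BigOperators

noncomputable section

instance : Fact ((0:ℝ) < 1) := ⟨one_pos⟩

/-- The `X`-valued trigonometric polynomial on the circle `𝕋 = ℝ/ℤ` with Fourier coefficients
`c`, keeping only the frequencies in `I ⊆ ℤ`. For `I = univ` this is the polynomial itself,
and in general it is the Fourier projection `D_I f`. -/
def fourierProj {X : Type*} [NormedAddCommGroup X] [NormedSpace ℂ X]
    (I : Set ℤ) (c : ℤ →₀ X) : AddCircle (1:ℝ) → X :=
  fun t => ∑ n ∈ c.support, I.indicator (fun m => (fourier m t) • c m) n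

/-- The `L^p(𝕋;X)` norm (w.r.t. the normalized Haar measure on the circle). -/
def tpNorm {X : Type*} [NormedAddCommGroup X] (p : ℝ≥0∞) (f : AddCircle (1:ℝ) → X) : ℝ :=
  (eLpNorm f p AddCircle.haarAddCircle).toReal

variable {X : Type*} [NormedAddCommGroup X] [NormedSpace ℂ X]

lemma continuous_fourierProj (I : Set ℤ) (c : ℤ →₀ X) : Continuous (fourierProj I c) := by
  unfold fourierProj
  refine continuous_finset_sum _ fun n _ => ?_
  by_cases h : n ∈ I
  · simp only [Set.indicator_of_mem h]
    exact (map_continuous (fourier n)).smul continuous_const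
  · simp only [Set.indicator_of_notMem h]
    exact continuous_const

lemma memLp_fourierProj (p : ℝ≥0∞) (I : Set ℤ) (c : ℤ →₀ X) :
    MemLp (fourierProj I c) p AddCircle.haarAddCircle := by
  have hc := continuous_fourierProj I c
  obtain ⟨x₀, hx₀⟩ := hc.norm.exists_forall_ge
    (by rw [Filter.cocompact_eq_bot]; exact Filter.tendsto_bot)
  exact MemLp.of_bound hc.aestronglyMeasurable _ (Filter.Eventually.of_forall hx₀)

lemma tpNorm_lt_top (p : ℝ≥0∞) (I : Set ℤ) (c : ℤ →₀ X) :
    eLpNorm (fourierProj I c) p AddCircle.haarAddCircle ≠ ⊤ :=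
  (memLp_fourierProj p I c).eLpNorm_ne_top

lemma fourierProj_zero_of_disjoint {I : Set ℤ} {c : ℤ →₀ X}
    (h : ∀ n ∈ c.support, n ∉ I) : fourierProj I c = 0 := by
  funext t
  refine Finset.sum_eq_zero fun n hn => Set.indicator_of_notMem (h n hn) _

lemma tpNorm_nonneg (p : ℝ≥0∞) (f : AddCircle (1:ℝ) → X) : 0 ≤ tpNorm p f :=
  ENNReal.toReal_nonneg

lemma tpNorm_zero (p : ℝ≥0∞) : tpNorm p (0 : AddCircle (1:ℝ) → X) = 0 := by
  simp [tpNorm]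

lemma fourierProj_eq_zero_of_tpNorm {p : ℝ≥0∞} (hp : 1 ≤ p) {I : Set ℤ} {c : ℤ →₀ X}
    (h : tpNorm p (fourierProj I c) = 0) : fourierProj I c = 0 := by
  have hc := continuous_fourierProj I c
  have h0 : eLpNorm (fourierProj I c) p AddCircle.haarAddCircle = 0 := by
    have := tpNorm_lt_top p I c
    rw [tpNorm] at h
    exact (ENNReal.toReal_eq_zero_iff _).1 h |>.resolve_right this
  have hae : fourierProj I c =ᵐ[AddCircle.haarAddCircle] 0 :=
    (eLpNorm_eq_zero_iff hc.aestronglyMeasurable (by positivity)).1 h0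
  exact (hc.ae_eq_iff_eq AddCircle.haarAddCircle continuous_const).1 hae

lemma tpNorm_sum_le {ι : Type*} (p : ℝ≥0∞) (hp : 1 ≤ p) (T : Finset ι)
    (f : ι → AddCircle (1:ℝ) → X) (hf : ∀ i, Continuous (f i))
    (hfin : ∀ i ∈ T, eLpNorm (f i) p AddCircle.haarAddCircle ≠ ⊤) :
    tpNorm p (∑ i ∈ T, f i) ≤ ∑ i ∈ T, tpNorm p (f i) := by
  unfold tpNorm
  calc (eLpNorm (∑ i ∈ T, f i) p AddCircle.haarAddCircle).toReal
      ≤ (∑ i ∈ T, eLpNorm (f i) p AddCircle.haarAddCircle).toReal := by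
        refine ENNReal.toReal_mono ?_ (eLpNorm_sum_le (fun i _ => (hf i).aestronglyMeasurable) hp)
        exact (ENNReal.sum_lt_top.mpr fun i hi => (hfin i hi).lt_top).ne
    _ = ∑ i ∈ T, (eLpNorm (f i) p AddCircle.haarAddCircle).toReal :=
        ENNReal.toReal_sum fun i hi => hfin i hi

end

section
variable {X : Type*} [NormedAddCommGroup X] [NormedSpace ℂ X]

lemma fourierProj_biUnion {ι : Type*} (Q : ι → Set ℤ) (T : Finset ι)
    (hdisj : (T : Set ι).Pairwise (Function.onFun Disjoint Q)) (c : ℤ →₀ X) :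
    fourierProj (⋃ i ∈ T, Q i) c = ∑ i ∈ T, fourierProj (Q i) c := by
  funext t
  simp only [fourierProj, Finset.sum_apply]
  rw [Finset.sum_comm]
  refine Finset.sum_congr rfl fun n _ => ?_
  by_cases h : ∃ i ∈ T, n ∈ Q i
  · obtain ⟨i₀, hi₀T, hi₀⟩ := h
    rw [Set.indicator_of_mem (Set.mem_iUnion₂.2 ⟨i₀, hi₀T, hi₀⟩ : n ∈ ⋃ i ∈ T, Q i),
      Finset.sum_eq_single_of_mem i₀ hi₀T
        (fun i hiT hne => Set.indicator_of_notMem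
          (fun hmem => Set.disjoint_left.1 (hdisj hiT hi₀T hne) hmem hi₀) _),
      Set.indicator_of_mem hi₀]
  · push_neg at h
    rw [Set.indicator_of_notMem (by simpa using h)]
    exact (Finset.sum_eq_zero fun i hi => Set.indicator_of_notMem (h i hi) _).symm

lemma fourierProj_univ_eq {ι : Type*} (Q : ι → Set ℤ) (T : Finset ι) (c : ℤ →₀ X)
    (hcov : ∀ n ∈ c.support, ∃ i ∈ T, n ∈ Q i) :
    fourierProj Set.univ c = fourierProj (⋃ i ∈ T, Q i) c := by
  funext t
  unfold fourierProj
  refine Finset.sum_congr rfl fun n hn => ?_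
  obtain ⟨i, hiT, hi⟩ := hcov n hn
  rw [Set.indicator_of_mem (Set.mem_univ n),
    Set.indicator_of_mem (Set.mem_iUnion₂.2 ⟨i, hiT, hi⟩ : n ∈ ⋃ i ∈ T, Q i)]

open Classical in
lemma fourierProj_filter (A I : Set ℤ) (hIA : I ⊆ A) (c : ℤ →₀ X) :
    fourierProj I (c.filter (fun n => n ∈ A)) = fourierProj I c := by
  funext t
  unfold fourierProj
  rw [Finsupp.support_filter]
  rw [Finset.sum_subset (Finset.filter_subset _ _)
    (fun n _ hn2 => ?_)]
  · refine Finset.sum_congr rfl fun n _ => ?_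
    by_cases hI : n ∈ I
    · rw [Set.indicator_of_mem hI, Set.indicator_of_mem hI,
        Finsupp.filter_apply_pos _ _ (hIA hI)]
    · rw [Set.indicator_of_notMem hI, Set.indicator_of_notMem hI]
  · by_cases hI : n ∈ I
    · exact absurd (Finset.mem_filter.2 ⟨‹_›, hIA hI⟩) hn2
    · exact Set.indicator_of_notMem hI _

open Classical in
lemma fourierProj_filter_univ (A : Set ℤ) (c : ℤ →₀ X) :
    fourierProj Set.univ (c.filter (fun n => n ∈ A)) = fourierProj A c := by
  funext t
  unfold fourierProj
  rw [Finsupp.support_filter]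
  rw [Finset.sum_subset (Finset.filter_subset _ _) (fun n hn1 hn2 => ?_)]
  · refine Finset.sum_congr rfl fun n _ => ?_
    rw [Set.indicator_of_mem (Set.mem_univ n)]
    by_cases hA : n ∈ A
    · rw [Set.indicator_of_mem hA, Finsupp.filter_apply_pos _ _ hA]
    · rw [Set.indicator_of_notMem hA, Finsupp.filter_apply_neg _ _ hA, smul_zero]
  · have hA : n ∉ A := fun h => hn2 (Finset.mem_filter.2 ⟨hn1, h⟩)
    rw [Set.indicator_of_mem (Set.mem_univ n), Finsupp.filter_apply_neg _ _ hA, smul_zero]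

end

lemma alg_eq (Sg M s q : ℝ) (hSg : 0 < Sg) (hM : 0 < M) (hq : 0 < q) (j : ℕ) :
    (Sg / (M / 2^(j+1)) ^ s) ^ (1/q) * (M / 2^j)
      = 2^(s/q) * Sg^(1/q) * M^(1-s/q) * ((2:ℝ)^(s/q-1))^j := by
  have hx : (0:ℝ) < M / 2^(j+1) := by positivity
  have hxs : (0:ℝ) < (M / 2^(j+1)) ^ s := Real.rpow_pos_of_pos hx s
  have hq' : q ≠ 0 := hq.ne'
  have hL1 : (0:ℝ) < (Sg / (M / 2^(j+1)) ^ s) ^ (1/q) := by positivity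
  have hL2 : (0:ℝ) < M / 2^j := by positivity
  have hR1 : (0:ℝ) < (2:ℝ)^(s/q) * Sg^(1/q) := by positivity
  have hR2 : (0:ℝ) < M^(1-s/q) := Real.rpow_pos_of_pos hM _
  have hR3 : (0:ℝ) < ((2:ℝ)^(s/q-1))^j := by positivity
  apply Real.log_injOn_pos (Set.mem_Ioi.2 (by positivity)) (Set.mem_Ioi.2 (by positivity))
  rw [Real.log_mul hL1.ne' hL2.ne', Real.log_rpow (by positivity), Real.log_div hSg.ne' hxs.ne',
    Real.log_rpow hx, Real.log_div hM.ne' (by positivity), Real.log_div hM.ne' (by positivity),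
    Real.log_pow, Real.log_pow, Real.log_mul (mul_pos hR1 hR2).ne' hR3.ne',
    Real.log_mul hR1.ne' hR2.ne', Real.log_mul (by positivity : (0:ℝ) < (2:ℝ)^(s/q)).ne'
      (by positivity : (0:ℝ) < Sg^(1/q)).ne',
    Real.log_rpow two_pos, Real.log_rpow hSg, Real.log_rpow hM, Real.log_pow,
    Real.log_rpow two_pos]
  push_cast
  field_simp
  ring


/-- If for some `r > q` the growth bound
`‖f‖_{L^p} ≤ U (#𝓘)^{1/q-1/r} (Σ_{I∈𝓘} ‖D_I f‖^r)^{1/r}` holds for all finite families of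
disjoint intervals and all polynomials supported there, then `X` has upper
`ℓ^s(L^p)`-decompositions for every `1 ≤ s < q`. -/
theorem growth_implies_upper_decompositions
    {X : Type*} [NormedAddCommGroup X] [NormedSpace ℂ X]
    (p : ℝ≥0∞) (hp : 1 ≤ p) (s q r : ℝ) (hs : 1 ≤ s) (hsq : s < q) (hqr : q < r) (U : ℝ)
    (hU0 : 0 < U)
    (hU : ∀ (𝓘 : Finset (Set ℤ)), (𝓘 : Set (Set ℤ)).Pairwise Disjoint →
      (∀ I ∈ 𝓘, I.OrdConnected) → ∀ c : ℤ →₀ X, (c.support : Set ℤ) ⊆ ⋃ I ∈ 𝓘, I →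
      tpNorm p (fourierProj Set.univ c) ≤
        U * (𝓘.card : ℝ) ^ (1/q - 1/r) *
          (∑ I ∈ 𝓘, tpNorm p (fourierProj I c) ^ r) ^ (1/r)) :
    ∃ C : ℝ, 0 < C ∧ ∀ (ι : Type) (P : ι → Set ℤ),
      Pairwise (Function.onFun Disjoint P) → (⋃ i, P i) = Set.univ →
      (∀ i, (P i).OrdConnected) → ∀ c : ℤ →₀ X,
      tpNorm p (fourierProj Set.univ c) ≤
        C * (∑' i, tpNorm p (fourierProj (P i) c) ^ s) ^ (1/s) := by
  classical
  have hs0 : (0:ℝ) < s := lt_of_lt_of_le one_pos hs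
  have hq0 : (0:ℝ) < q := hs0.trans hsq
  have hr0 : (0:ℝ) < r := hq0.trans hqr
  have hsq1 : s / q < 1 := (div_lt_one hq0).2 hsq
  have ht0 : (0:ℝ) < (2:ℝ)^(s/q-1) := Real.rpow_pos_of_pos two_pos _
  have ht1 : (2:ℝ)^(s/q-1) < 1 := Real.rpow_lt_one_of_one_lt_of_neg one_lt_two (by linarith)
  have hKpos : (0:ℝ) < 1 - (2:ℝ)^(s/q-1) := by linarith
  refine ⟨U * 2^(s/q) * (1 - (2:ℝ)^(s/q-1))⁻¹,
    mul_pos (mul_pos hU0 (Real.rpow_pos_of_pos two_pos _)) (inv_pos.2 hKpos), ?_⟩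
  intro ι P hdisjP hcovP hord c
  set a : ι → ℝ := fun i => tpNorm p (fourierProj (P i) c) with ha
  have ha0 : ∀ i, 0 ≤ a i := fun i => tpNorm_nonneg _ _
  have hidx : ∀ n : ℤ, ∃ i, n ∈ P i := fun n => by
    have h := Set.mem_univ n
    rw [← hcovP] at h
    exact Set.mem_iUnion.1 h
  choose idx hidxmem using hidx
  set S₀ : Finset ι := c.support.image idx with hS₀
  set S : Finset ι := S₀.filter (fun i => a i ≠ 0) with hSdef
  have hmiss : ∀ i ∉ S₀, ∀ n ∈ c.support, n ∉ P i := by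
    intro i hi n hn hnP
    refine hi ?_
    have hne : idx n = i := by
      by_contra hne
      exact Set.disjoint_left.1 (hdisjP hne) (hidxmem n) hnP
    exact hne ▸ Finset.mem_image_of_mem idx hn
  have hzS : ∀ i ∉ S, a i = 0 := by
    intro i hi
    by_cases h0 : i ∈ S₀
    · by_contra hne
      exact hi (Finset.mem_filter.2 ⟨h0, hne⟩)
    · show tpNorm p (fourierProj (P i) c) = 0
      rw [fourierProj_zero_of_disjoint (hmiss i h0), tpNorm_zero]
  have htsum : ∑' i, tpNorm p (fourierProj (P i) c) ^ s = ∑ i ∈ S, a i ^ s :=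
    tsum_eq_sum (fun i hi => by
      rw [show tpNorm p (fourierProj (P i) c) = a i from rfl, hzS i hi,
        Real.zero_rpow hs0.ne'])
  rw [htsum]
  set Sg : ℝ := ∑ i ∈ S, a i ^ s with hSg
  have hSg0 : 0 ≤ Sg := Finset.sum_nonneg fun i _ => Real.rpow_nonneg (ha0 i) s
  rcases Finset.eq_empty_or_nonempty S with hSe | hSne
  · have hcovS₀ : ∀ n ∈ c.support, ∃ i ∈ S₀, n ∈ P i :=
      fun n hn => ⟨idx n, Finset.mem_image_of_mem idx hn, hidxmem n⟩
    have hfz : fourierProj Set.univ c = 0 := by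
      rw [fourierProj_univ_eq P S₀ c hcovS₀, fourierProj_biUnion P S₀ (hdisjP.set_pairwise _) c]
      refine Finset.sum_eq_zero fun i hi => ?_
      exact fourierProj_eq_zero_of_tpNorm hp (hzS i (by rw [hSe]; exact Finset.notMem_empty i))
    rw [hfz, tpNorm_zero]
    exact mul_nonneg (mul_nonneg (mul_nonneg hU0.le (Real.rpow_pos_of_pos two_pos _).le)
      (inv_pos.2 hKpos).le) (Real.rpow_nonneg hSg0 _)
  · obtain ⟨i₀, hi₀S, hi₀max⟩ := Finset.exists_mem_eq_sup' hSne a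
    set M : ℝ := S.sup' hSne a with hMdef
    have hMa : ∀ i ∈ S, a i ≤ M := fun i hi => Finset.le_sup' a hi
    have hai₀ : a i₀ ≠ 0 := (Finset.mem_filter.1 hi₀S).2
    have hM0 : 0 < M := by
      rw [hi₀max]
      exact lt_of_le_of_ne (ha0 i₀) (Ne.symm hai₀)
    have hSgpos : 0 < Sg := by
      refine lt_of_lt_of_le (Real.rpow_pos_of_pos hM0 s) ?_
      rw [hi₀max]
      exact Finset.single_le_sum (fun i _ => Real.rpow_nonneg (ha0 i) s) hi₀S
    obtain ⟨i₁, hi₁S, hi₁min⟩ := Finset.exists_mem_eq_inf' hSne a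
    set eps : ℝ := S.inf' hSne a with hepsdef
    have hepsa : ∀ i ∈ S, eps ≤ a i := fun i hi => Finset.inf'_le a hi
    have heps0 : 0 < eps := by
      rw [hi₁min]
      exact lt_of_le_of_ne (ha0 i₁) (Ne.symm (Finset.mem_filter.1 hi₁S).2)
    obtain ⟨J, hJ⟩ : ∃ J : ℕ, M / eps < 2 ^ J := pow_unbounded_of_one_lt _ one_lt_two
    have hJe : ∀ i ∈ S, M / 2 ^ (J + 1) < a i := by
      intro i hi
      refine lt_of_lt_of_le ?_ (hepsa i hi)
      rw [div_lt_iff₀ (by positivity)]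
      rw [div_lt_iff₀ heps0] at hJ
      have hpowJ : (2:ℝ) ^ J ≤ 2 ^ (J+1) := pow_le_pow_right₀ one_le_two (Nat.le_succ J)
      nlinarith
    set B : ℕ → Finset ι := fun j => S.filter (fun i => M / 2^(j+1) < a i ∧ a i ≤ M / 2^j)
      with hB
    have hBS : ∀ j, B j ⊆ S := fun j => Finset.filter_subset _ _
    have hBdisj : ∀ j1 j2 : ℕ, j1 < j2 → Disjoint (B j1) (B j2) := by
      intro j1 j2 h12
      rw [Finset.disjoint_left]
      intro i hi1 hi2
      have h1 : M / 2^(j1+1) < a i := ((Finset.mem_filter.1 hi1).2).1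
      have h2 : a i ≤ M / 2^j2 := ((Finset.mem_filter.1 hi2).2).2
      have hpow : (2:ℝ)^(j1+1) ≤ 2^j2 := pow_le_pow_right₀ one_le_two h12
      have : M / 2^j2 ≤ M / 2^(j1+1) := by
        apply div_le_div_of_nonneg_left hM0.le (by positivity) hpow
      linarith
    have hcovB : ∀ i ∈ S, ∃ j ∈ Finset.range (J+1), i ∈ B j := by
      intro i hi
      have hex : ∃ j : ℕ, M / 2^(j+1) < a i := ⟨J, hJe i hi⟩
      have hj0le : Nat.find hex ≤ J := Nat.find_min' hex (hJe i hi)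
      refine ⟨Nat.find hex, Finset.mem_range.2 (Nat.lt_succ_of_le hj0le),
        Finset.mem_filter.2 ⟨hi, Nat.find_spec hex, ?_⟩⟩
      rcases Nat.eq_zero_or_pos (Nat.find hex) with h0 | hpos
      · rw [h0]
        simpa using hMa i hi
      · have hm := Nat.find_min hex (Nat.pred_lt hpos.ne')
        rw [show (Nat.find hex).pred + 1 = Nat.find hex from Nat.succ_pred_eq_of_pos hpos] at hm
        exact not_lt.1 hm
    have hSbi : S = (Finset.range (J+1)).biUnion B := by
      ext i
      simp only [Finset.mem_biUnion]
      constructor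
      · exact hcovB i
      · rintro ⟨j, -, hij⟩
        exact hBS j hij
    have hcovS₀ : ∀ n ∈ c.support, ∃ i ∈ S₀, n ∈ P i :=
      fun n hn => ⟨idx n, Finset.mem_image_of_mem idx hn, hidxmem n⟩
    have hdecomp : fourierProj Set.univ c
        = ∑ j ∈ Finset.range (J+1), fourierProj (⋃ i ∈ B j, P i) c := by
      rw [fourierProj_univ_eq P S₀ c hcovS₀, fourierProj_biUnion P S₀ (hdisjP.set_pairwise _) c]
      have h2 : ∑ i ∈ S₀, fourierProj (P i) c = ∑ i ∈ S, fourierProj (P i) c := by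
        refine (Finset.sum_subset (Finset.filter_subset _ _) ?_).symm
        intro i hi0 hiS
        exact fourierProj_eq_zero_of_tpNorm hp (hzS i hiS)
      have h3 : ∑ i ∈ S, fourierProj (P i) c
          = ∑ j ∈ Finset.range (J+1), ∑ i ∈ B j, fourierProj (P i) c := by
        rw [hSbi]
        refine Finset.sum_biUnion ?_
        intro j1 hj1 j2 hj2 hne
        rcases lt_or_gt_of_ne hne with h | h
        exacts [hBdisj _ _ h, (hBdisj _ _ h).symm]
      rw [h2, h3]
      exact Finset.sum_congr rfl fun j _ =>
        (fourierProj_biUnion P (B j) (hdisjP.set_pairwise _) c).symm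
    have hkey : ∀ j : ℕ, tpNorm p (fourierProj (⋃ i ∈ B j, P i) c)
        ≤ U * 2^(s/q) * Sg^(1/q) * M^(1-s/q) * ((2:ℝ)^(s/q-1)) ^ j := by
      intro j
      rcases Finset.eq_empty_or_nonempty (B j) with hBe | hBne
      · have hempty : (⋃ i ∈ B j, P i) = (∅ : Set ℤ) := by rw [hBe]; simp
        rw [hempty, fourierProj_zero_of_disjoint (fun n _ => Set.notMem_empty n), tpNorm_zero]
        exact mul_nonneg (mul_nonneg (mul_nonneg (mul_nonneg hU0.le
          (Real.rpow_pos_of_pos two_pos _).le) (Real.rpow_nonneg hSg0 _))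
          (Real.rpow_nonneg hM0.le _)) (pow_nonneg ht0.le j)
      · have hPne : ∀ i ∈ B j, (P i).Nonempty := by
          intro i hi
          have hiS0 : i ∈ S₀ := Finset.mem_of_mem_filter i (hBS j hi)
          obtain ⟨n, hn, rfl⟩ := Finset.mem_image.1 hiS0
          exact ⟨n, hidxmem n⟩
        have hinj : ∀ i ∈ B j, ∀ i' ∈ B j, P i = P i' → i = i' := by
          intro i hi i' hi' hPP
          by_contra hne
          have hd := hdisjP hne
          rw [Function.onFun, hPP] at hd
          obtain ⟨n, hn⟩ := hPne i' hi'
          exact Set.disjoint_left.1 hd hn hn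
        have hUnion : ⋃ I ∈ (B j).image P, I = ⋃ i ∈ B j, P i := by
          ext n
          simp only [Set.mem_iUnion, Finset.mem_image, exists_prop]
          constructor
          · rintro ⟨I, ⟨i, hi, rfl⟩, hnI⟩
            exact ⟨i, hi, hnI⟩
          · rintro ⟨i, hi, hni⟩
            exact ⟨P i, ⟨i, hi, rfl⟩, hni⟩
        have hdisj𝓘 : (↑((B j).image P) : Set (Set ℤ)).Pairwise Disjoint := by
          intro I hI J' hJ' hne
          simp only [Finset.coe_image, Set.mem_image, Finset.mem_coe] at hI hJ'
          obtain ⟨i, hi, rfl⟩ := hI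
          obtain ⟨i', hi', rfl⟩ := hJ'
          exact hdisjP (fun h => hne (by rw [h]))
        have hord𝓘 : ∀ I ∈ (B j).image P, I.OrdConnected := by
          intro I hI
          obtain ⟨i, -, rfl⟩ := Finset.mem_image.1 hI
          exact hord i
        set c' : ℤ →₀ X := c.filter (fun n => n ∈ ⋃ i ∈ B j, P i) with hc'
        have hsupp : (c'.support : Set ℤ) ⊆ ⋃ I ∈ (B j).image P, I := by
          rw [hUnion]
          intro n hn
          simp only [Finset.mem_coe, hc', Finsupp.support_filter, Finset.mem_filter] at hn
          exact hn.2
        have hmain := hU ((B j).image P) hdisj𝓘 hord𝓘 c' hsupp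
        rw [Finset.card_image_of_injOn (fun i hi i' hi' h => hinj i hi i' hi' h)] at hmain
        have heq1 : fourierProj Set.univ c' = fourierProj (⋃ i ∈ B j, P i) c :=
          fourierProj_filter_univ _ c
        have heq2 : ∑ I ∈ (B j).image P, tpNorm p (fourierProj I c') ^ r
            = ∑ i ∈ B j, a i ^ r := by
          rw [Finset.sum_image hinj]
          refine Finset.sum_congr rfl fun i hi => ?_
          rw [hc', fourierProj_filter (⋃ i ∈ B j, P i) (P i)
            (fun n hn => Set.mem_iUnion₂.2 ⟨i, hi, hn⟩) c]
        rw [heq1, heq2] at hmain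
        set d : ℝ := ((B j).card : ℝ) with hd
        have hd0 : (0:ℝ) < d := by
          rw [hd]
          exact_mod_cast Finset.card_pos.2 hBne
        have hMdiv : (0:ℝ) < M / 2^j := div_pos hM0 (by positivity)
        have hsum_r : ∑ i ∈ B j, a i ^ r ≤ d * (M / 2^j) ^ r := by
          have h := Finset.sum_le_card_nsmul (B j) (fun i => a i ^ r) ((M / 2^j)^r)
            (fun i hi => Real.rpow_le_rpow (ha0 i) (Finset.mem_filter.1 hi).2.2 hr0.le)
          rwa [nsmul_eq_mul] at h
        have hstep1 : (∑ i ∈ B j, a i ^ r) ^ (1/r) ≤ d ^ (1/r) * (M / 2^j) := by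
          have h1 : (∑ i ∈ B j, a i ^ r) ^ (1/r) ≤ (d * (M / 2^j) ^ r) ^ (1/r) :=
            Real.rpow_le_rpow (Finset.sum_nonneg fun i _ => Real.rpow_nonneg (ha0 i) r)
              hsum_r (by positivity)
          refine h1.trans_eq ?_
          rw [Real.mul_rpow hd0.le (Real.rpow_nonneg hMdiv.le r),
            ← Real.rpow_mul hMdiv.le, mul_one_div_cancel hr0.ne', Real.rpow_one]
        have hcard_bound : d ≤ Sg / (M / 2^(j+1)) ^ s := by
          have hx : (0:ℝ) < (M / 2^(j+1)) ^ s :=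
            Real.rpow_pos_of_pos (div_pos hM0 (by positivity)) s
          rw [le_div_iff₀ hx]
          have h1 : ∀ i ∈ B j, (M / 2^(j+1)) ^ s ≤ a i ^ s := fun i hi =>
            Real.rpow_le_rpow (div_pos hM0 (by positivity)).le
              (le_of_lt (Finset.mem_filter.1 hi).2.1) hs0.le
          have h2 := Finset.card_nsmul_le_sum (B j) (fun i => a i ^ s) _ h1
          rw [nsmul_eq_mul] at h2
          exact h2.trans (Finset.sum_le_sum_of_subset_of_nonneg (hBS j)
            (fun i _ _ => Real.rpow_nonneg (ha0 i) s))
        calc tpNorm p (fourierProj (⋃ i ∈ B j, P i) c)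
            ≤ U * d ^ (1/q - 1/r) * (∑ i ∈ B j, a i ^ r) ^ (1/r) := hmain
          _ ≤ U * d ^ (1/q - 1/r) * (d ^ (1/r) * (M / 2^j)) :=
              mul_le_mul_of_nonneg_left hstep1
                (mul_nonneg hU0.le (Real.rpow_nonneg hd0.le _))
          _ = U * d ^ (1/q) * (M / 2^j) := by
              rw [show (1:ℝ)/q = (1/q - 1/r) + 1/r by ring, Real.rpow_add hd0]
              ring
          _ ≤ U * (Sg / (M / 2^(j+1)) ^ s) ^ (1/q) * (M / 2^j) := by
              have hX : d ^ (1/q) ≤ (Sg / (M / 2^(j+1)) ^ s) ^ (1/q) :=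
                Real.rpow_le_rpow hd0.le hcard_bound (by positivity)
              exact mul_le_mul_of_nonneg_right (mul_le_mul_of_nonneg_left hX hU0.le) hMdiv.le
          _ = U * 2^(s/q) * Sg^(1/q) * M^(1-s/q) * ((2:ℝ)^(s/q-1)) ^ j := by
              rw [mul_assoc, alg_eq Sg M s q hSgpos hM0 hq0 j]
              ring
    have hT := tpNorm_sum_le p hp (Finset.range (J+1))
      (fun j => fourierProj (⋃ i ∈ B j, P i) c)
      (fun j => continuous_fourierProj _ c)
      (fun j _ => tpNorm_lt_top p _ c)
    have hgeom : ∑ j ∈ Finset.range (J+1), ((2:ℝ)^(s/q-1)) ^ j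
        ≤ (1 - (2:ℝ)^(s/q-1))⁻¹ := by
      calc ∑ j ∈ Finset.range (J+1), ((2:ℝ)^(s/q-1)) ^ j
          ≤ ∑' j : ℕ, ((2:ℝ)^(s/q-1)) ^ j :=
            Summable.sum_le_tsum _ (fun j _ => pow_nonneg ht0.le j)
              (summable_geometric_of_lt_one ht0.le ht1)
        _ = (1 - (2:ℝ)^(s/q-1))⁻¹ := tsum_geometric_of_lt_one ht0.le ht1
    have hMS : M ^ (1 - s/q) ≤ Sg ^ (1/s - 1/q) := by
      have h1 : M ^ s ≤ Sg := by
        have := Finset.single_le_sum (fun i (_ : i ∈ S) => Real.rpow_nonneg (ha0 i) s) hi₀S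
        rw [hi₀max]
        exact this
      have h2 : M ≤ Sg ^ (1/s) := by
        have h3 := Real.rpow_le_rpow (Real.rpow_nonneg hM0.le s) h1
          (by positivity : (0:ℝ) ≤ 1/s)
        rwa [← Real.rpow_mul hM0.le, mul_one_div_cancel hs0.ne', Real.rpow_one] at h3
      calc M ^ (1 - s/q) ≤ (Sg ^ (1/s)) ^ (1 - s/q) :=
            Real.rpow_le_rpow hM0.le h2 (by linarith)
        _ = Sg ^ (1/s - 1/q) := by
            rw [← Real.rpow_mul hSg0]
            congr 1
            field_simp
    rw [hdecomp]
    calc tpNorm p (∑ j ∈ Finset.range (J+1), fourierProj (⋃ i ∈ B j, P i) c)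
        ≤ ∑ j ∈ Finset.range (J+1), tpNorm p (fourierProj (⋃ i ∈ B j, P i) c) := hT
      _ ≤ ∑ j ∈ Finset.range (J+1),
            U * 2^(s/q) * Sg^(1/q) * M^(1-s/q) * ((2:ℝ)^(s/q-1)) ^ j :=
          Finset.sum_le_sum fun j _ => hkey j
      _ = U * 2^(s/q) * Sg^(1/q) * M^(1-s/q)
            * ∑ j ∈ Finset.range (J+1), ((2:ℝ)^(s/q-1)) ^ j := by
          rw [Finset.mul_sum]
      _ ≤ U * 2^(s/q) * Sg^(1/q) * M^(1-s/q) * (1 - (2:ℝ)^(s/q-1))⁻¹ :=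
          mul_le_mul_of_nonneg_left hgeom
            (mul_nonneg (mul_nonneg (mul_nonneg hU0.le
              (Real.rpow_pos_of_pos two_pos _).le) (Real.rpow_nonneg hSg0 _))
              (Real.rpow_nonneg hM0.le _))
      _ ≤ U * 2^(s/q) * Sg^(1/q) * Sg^(1/s - 1/q) * (1 - (2:ℝ)^(s/q-1))⁻¹ := by
          refine mul_le_mul_of_nonneg_right (mul_le_mul_of_nonneg_left hMS ?_) ?_
          · exact mul_nonneg (mul_nonneg hU0.le (Real.rpow_pos_of_pos two_pos _).le)
              (Real.rpow_nonneg hSg0 _)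
          · exact (inv_pos.2 hKpos).le
      _ = U * 2^(s/q) * (1 - (2:ℝ)^(s/q-1))⁻¹ * Sg ^ (1/s) := by
          rw [mul_assoc (U * 2^(s/q)) (Sg^(1/q)), ← Real.rpow_add hSgpos,
            show 1/q + (1/s - 1/q) = 1/s by ring]
          ring
end

section
/- Let X be a Banach space, p ∈ [1,2], q ∈ [1,∞], and suppose ‖Σ_{k=1}^n e_k x_k‖_{L^p(𝕋;X)} ≤ U (Σ_{k=1}^n ‖x_k‖^q)^{1/q} holds for all finite sequences in X. Then with 1/s = 1 - p/(2q'), one has ‖Σ_{k=1}^n e_k x_k‖_{L^2(𝕋;X)} ≤ U^{p/2} n^{1/s - 1/2} (Σ_{k=1}^n ‖x_k‖²)^{1/2} for all x_1,...,x_n ∈ X. -/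
open MeasureTheory Set
open scoped ENNReal BigOperators

noncomputable section

abbrev μ1 : Measure (AddCircle (1:ℝ)) := AddCircle.haarAddCircle


lemma norm_fourier1 (n : ℤ) (t : AddCircle (1:ℝ)) : ‖fourier n t‖ = 1 := Circle.norm_coe _

/-- Rudin–Shapiro coefficient pair. -/
def rs : ℕ → (ℕ → ℂ) × (ℕ → ℂ)
  | 0 => (fun _ => 1, fun _ => 1)
  | (k+1) =>
    (fun m => if m < 2^k then (rs k).1 m else (rs k).2 (m - 2^k),
     fun m => if m < 2^k then (rs k).1 m else - (rs k).2 (m - 2^k))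

lemma rs_norm (k : ℕ) : ∀ m, ‖(rs k).1 m‖ = 1 ∧ ‖(rs k).2 m‖ = 1 := by
  induction k with
  | zero => intro m; simp [rs]
  | succ k ih =>
    intro m
    simp only [rs]
    by_cases h : m < 2^k
    · simp [h, ih m]
    · simp [h, ih (m - 2^k)]

def rsP (k : ℕ) : AddCircle (1:ℝ) → ℂ := fun t => ∑ m ∈ Finset.range (2^k), (rs k).1 m * fourier (m:ℤ) t
def rsQ (k : ℕ) : AddCircle (1:ℝ) → ℂ := fun t => ∑ m ∈ Finset.range (2^k), (rs k).2 m * fourier (m:ℤ) t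

lemma rsP_succ (k : ℕ) (t : AddCircle (1:ℝ)) :
    rsP (k+1) t = rsP k t + fourier ((2^k : ℕ) : ℤ) t * rsQ k t := by
  have h2 : 2^(k+1) = 2^k + 2^k := by ring
  rw [rsP, h2, Finset.sum_range_add]
  congr 1
  · apply Finset.sum_congr rfl
    intro m hm
    rw [Finset.mem_range] at hm
    simp only [rs, if_pos hm]
  · rw [rsQ, Finset.mul_sum]
    apply Finset.sum_congr rfl
    intro m hm
    rw [Finset.mem_range] at hm
    simp only [rs, if_neg (by omega : ¬ (2^k + m < 2^k)), Nat.add_sub_cancel_left]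
    have : ((2^k + m : ℕ) : ℤ) = ((2^k : ℕ) : ℤ) + (m : ℤ) := by push_cast; ring
    rw [this, fourier_add]
    ring

lemma rsQ_succ (k : ℕ) (t : AddCircle (1:ℝ)) :
    rsQ (k+1) t = rsP k t - fourier ((2^k : ℕ) : ℤ) t * rsQ k t := by
  have h2 : 2^(k+1) = 2^k + 2^k := by ring
  rw [rsQ, h2, Finset.sum_range_add, sub_eq_add_neg]
  congr 1
  · apply Finset.sum_congr rfl
    intro m hm
    rw [Finset.mem_range] at hm
    simp only [rs, if_pos hm]
  · rw [rsQ, Finset.mul_sum, ← Finset.sum_neg_distrib]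
    apply Finset.sum_congr rfl
    intro m hm
    rw [Finset.mem_range] at hm
    simp only [rs, if_neg (by omega : ¬ (2^k + m < 2^k)), Nat.add_sub_cancel_left]
    have : ((2^k + m : ℕ) : ℤ) = ((2^k : ℕ) : ℤ) + (m : ℤ) := by push_cast; ring
    rw [this, fourier_add]
    ring

lemma rs_flat (k : ℕ) (t : AddCircle (1:ℝ)) :
    ‖rsP k t‖^2 + ‖rsQ k t‖^2 = 2^(k+1) := by
  induction k with
  | zero =>
    have h1 : rsP 0 t = 1 := by simp [rsP, rs, fourier_zero]
    have h2 : rsQ 0 t = 1 := by simp [rsQ, rs, fourier_zero]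
    rw [h1, h2]
    norm_num
  | succ k ih =>
    rw [rsP_succ, rsQ_succ]
    have hpl := parallelogram_law_with_norm ℂ (rsP k t) (fourier ((2^k : ℕ) : ℤ) t * rsQ k t)
    have hn : ‖fourier ((2^k : ℕ) : ℤ) t * rsQ k t‖ = ‖rsQ k t‖ := by
      rw [norm_mul, norm_fourier1, one_mul]
    rw [hn] at hpl
    have : ‖rsP k t + fourier ((2^k : ℕ) : ℤ) t * rsQ k t‖^2 +
        ‖rsP k t - fourier ((2^k : ℕ) : ℤ) t * rsQ k t‖^2
        = 2 * (‖rsP k t‖^2 + ‖rsQ k t‖^2) := by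
      simpa [pow_two] using hpl
    rw [this, ih]
    ring

lemma integral_fourier1 (j : ℤ) :
    ∫ t, fourier j t ∂μ1 = if j = 0 then 1 else 0 := by
  split_ifs with h
  · subst h
    have : (fun t : AddCircle (1:ℝ) => fourier 0 t) = fun _ => (1:ℂ) := by
      ext t; exact fourier_zero
    rw [this, integral_const, probReal_univ]
    simp
  · exact integral_eq_zero_of_add_right_eq_neg (μ := μ1)
      (fourier_add_half_inv_index h one_pos)

lemma cont_int' {E : Type*} [NormedAddCommGroup E] {f : AddCircle (1:ℝ) → E}
    (hf : Continuous f) : Integrable f μ1 :=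
  hf.integrable_of_hasCompactSupport (HasCompactSupport.of_compactSpace f)

lemma parseval_rsP (k : ℕ) : ∫ t, ‖rsP k t‖^2 ∂μ1 = 2^k := by
  set N := 2^k with hN
  set c := (rs k).1 with hc
  have hfc : ∀ (g : ℂ) (j : ℤ), Integrable (fun t => g * fourier j t) μ1 :=
    fun g j => cont_int' (continuous_const.mul (fourier j).continuous)
  have hJ : ∫ t, (rsP k t * (starRingEnd ℂ) (rsP k t)) ∂μ1 = (N : ℂ) := by
    have hexp : ∀ t, rsP k t * (starRingEnd ℂ) (rsP k t) =
        ∑ m ∈ Finset.range N, ∑ m' ∈ Finset.range N,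
          (c m * (starRingEnd ℂ) (c m')) * fourier ((m:ℤ) - (m':ℤ)) t := by
      intro t
      rw [rsP, map_sum, Finset.sum_mul_sum]
      apply Finset.sum_congr rfl
      intro m _
      apply Finset.sum_congr rfl
      intro m' _
      rw [map_mul, ← fourier_neg, sub_eq_add_neg, fourier_add]
      ring
    simp_rw [hexp]
    rw [integral_finset_sum _ (fun m _ => integrable_finset_sum _ (fun m' _ => hfc _ _))]
    have hin : ∀ m ∈ Finset.range N,
        ∫ t, (∑ m' ∈ Finset.range N,
          (c m * (starRingEnd ℂ) (c m')) * fourier ((m:ℤ) - (m':ℤ)) t) ∂μ1 = 1 := by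
      intro m hm
      rw [integral_finset_sum _ (fun m' _ => hfc _ _)]
      have : ∀ m' ∈ Finset.range N,
          ∫ t, (c m * (starRingEnd ℂ) (c m')) * fourier ((m:ℤ) - (m':ℤ)) t ∂μ1
            = if m' = m then 1 else 0 := by
        intro m' _
        rw [integral_const_mul, integral_fourier1]
        by_cases h : m' = m
        · subst h
          rw [if_pos (by ring), if_pos rfl, mul_one]
          have : c m' * (starRingEnd ℂ) (c m') = ((‖c m'‖^2 : ℝ) : ℂ) := by
            rw [Complex.mul_conj, Complex.normSq_eq_norm_sq]
          rw [this, (rs_norm k m').1]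
          norm_num
        · have hne : ¬ ((m:ℤ) - (m':ℤ) = 0) := by
            intro hh
            apply h
            have := sub_eq_zero.mp hh
            exact_mod_cast this.symm
          rw [if_neg hne, if_neg h, mul_zero]
      rw [Finset.sum_congr rfl this, Finset.sum_ite_eq' (Finset.range N) m (fun _ => (1:ℂ)),
        if_pos hm]
    rw [Finset.sum_congr rfl hin, Finset.sum_const, Finset.card_range]
    simp
  have hre : ∀ t, rsP k t * (starRingEnd ℂ) (rsP k t) = ((‖rsP k t‖^2 : ℝ) : ℂ) := by
    intro t
    rw [Complex.mul_conj, Complex.normSq_eq_norm_sq]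
  simp_rw [hre] at hJ
  have hcont : Continuous (rsP k) := by
    apply continuous_finset_sum
    intro m _
    exact continuous_const.mul (fourier _).continuous
  have hint2 : Integrable (fun t => ((‖rsP k t‖^2 : ℝ) : ℂ)) μ1 :=
    cont_int' (Complex.continuous_ofReal.comp ((hcont.norm).pow 2))
  have h3 := integral_re hint2
  rw [hJ] at h3
  have h4 : ∫ t, ‖rsP k t‖^2 ∂μ1 = (N : ℝ) := by
    simpa [← Complex.ofReal_pow] using h3
  rw [h4, hN]
  push_cast
  ring

lemma tpNorm_eq_integral {X : Type*} [NormedAddCommGroup X] {F : AddCircle (1:ℝ) → X}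
    (hF : Continuous F) (r : ℝ) (hr : 1 ≤ r) :
    tpNorm (ENNReal.ofReal r) F = (∫ t, ‖F t‖ ^ r ∂μ1) ^ (1/r) := by
  have hr0 : 0 < r := lt_of_lt_of_le one_pos hr
  have hcont : Continuous fun t => ‖F t‖ ^ r := by
    exact (hF.norm).rpow_const (fun x => Or.inr hr0.le)
  have hint : Integrable (fun t => ‖F t‖ ^ r) μ1 := cont_int' hcont
  have hlint : ∫⁻ t, ‖F t‖ₑ ^ r ∂μ1 = ENNReal.ofReal (∫ t, ‖F t‖ ^ r ∂μ1) := by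
    rw [ofReal_integral_eq_lintegral_ofReal hint
      (Filter.Eventually.of_forall fun t => Real.rpow_nonneg (norm_nonneg _) r)]
    congr 1
    ext t
    rw [← ofReal_norm, ENNReal.ofReal_rpow_of_nonneg (norm_nonneg _) hr0.le]
  rw [tpNorm, eLpNorm_eq_lintegral_rpow_enorm_toReal (by simp [hr0]) (by simp),
    ENNReal.toReal_ofReal hr0.le, hlint, ← ENNReal.toReal_rpow,
    ENNReal.toReal_ofReal (integral_nonneg fun t => Real.rpow_nonneg (norm_nonneg _) r)]

lemma tpNorm_two_eq {X : Type*} [NormedAddCommGroup X] {F : AddCircle (1:ℝ) → X}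
    (hF : Continuous F) :
    tpNorm 2 F = (∫ t, ‖F t‖ ^ (2:ℝ) ∂μ1) ^ (1/(2:ℝ)) := by
  rw [← tpNorm_eq_integral hF 2 one_le_two]
  norm_num

lemma ptwise {x M p : ℝ} (hx : 0 ≤ x) (hxM : x ≤ M) (hp1 : 1 ≤ p) (hp2 : p ≤ 2) :
    x ^ (2:ℝ) ≤ M ^ (2 - p) * x ^ p := by
  rcases eq_or_lt_of_le hx with h0 | h0
  · rw [← h0, Real.zero_rpow (by norm_num), Real.zero_rpow (by positivity), mul_zero]
  · have : x ^ (2:ℝ) = x ^ (2 - p) * x ^ p := by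
      rw [← Real.rpow_add h0]; ring_nf
    rw [this]
    exact mul_le_mul_of_nonneg_right (Real.rpow_le_rpow hx hxM (by linarith))
      (Real.rpow_nonneg hx p)

lemma crude_integral {X : Type*} [NormedAddCommGroup X] {F : AddCircle (1:ℝ) → X}
    (hF : Continuous F) {M p : ℝ} (hM : ∀ t, ‖F t‖ ≤ M) (hp1 : 1 ≤ p) (hp2 : p ≤ 2) :
    ∫ t, ‖F t‖ ^ (2:ℝ) ∂μ1 ≤ M ^ (2 - p) * ∫ t, ‖F t‖ ^ p ∂μ1 := by
  have hp0 : (0:ℝ) < p := by linarith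
  have h1 : Integrable (fun t => ‖F t‖ ^ (2:ℝ)) μ1 :=
    cont_int' ((hF.norm).rpow_const (fun x => Or.inr (by norm_num)))
  have h2 : Integrable (fun t => M ^ (2 - p) * ‖F t‖ ^ p) μ1 :=
    (cont_int' ((hF.norm).rpow_const (fun x => Or.inr hp0.le))).const_mul _
  rw [← integral_const_mul]
  exact integral_mono h1 h2 fun t => ptwise (norm_nonneg _) (hM t) hp1 hp2

lemma rs_contra {X : Type*} [NormedAddCommGroup X] [NormedSpace ℂ X]
    (p q : ℝ) (hp1 : 1 ≤ p) (hp2 : p ≤ 2) (hq2 : 2 < q) (U : ℝ) (hU0 : 0 ≤ U)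
    {v : X} (hv : v ≠ 0)
    (hU : ∀ (n : ℕ) (x : Fin n → X),
      tpNorm (ENNReal.ofReal p) (fun t => ∑ k : Fin n, (fourier (((k : ℕ) : ℤ) + 1) t) • x k) ≤
        U * (∑ k, ‖x k‖ ^ q) ^ (1/q)) : False := by
  have hp0 : (0:ℝ) < p := by linarith
  have hq0 : (0:ℝ) < q := by linarith
  set b := ‖v‖ with hbdef
  have hb : 0 < b := norm_pos_iff.mpr hv
  -- the master inequality for each K
  have key : ∀ K : ℕ, (2:ℝ)^(K:ℕ) * b^(2:ℕ) ≤
      (Real.sqrt (2 * 2^K) * b)^(2-p) * (U * ((2:ℝ)^(K:ℕ))^((1:ℝ)/q) * b)^p := by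
    intro K
    set N : ℕ := 2^K with hNdef
    have hNR : ((N:ℕ):ℝ) = (2:ℝ)^(K:ℕ) := by rw [hNdef]; push_cast; norm_num
    set c := (rs K).1 with hc
    set F : AddCircle (1:ℝ) → X :=
      fun t => ∑ k : Fin N, (fourier (((k:ℕ):ℤ) + 1) t) • (c (k:ℕ) • v) with hFdef
    have hFeq : ∀ t, F t = (fourier 1 t * rsP K t) • v := by
      intro t
      rw [hFdef]
      calc ∑ k : Fin N, (fourier (((k:ℕ):ℤ) + 1) t) • (c (k:ℕ) • v)
          = ∑ k : Fin N, ((fourier 1 t) * (c (k:ℕ) * fourier ((k:ℕ):ℤ) t)) • v := by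
            apply Finset.sum_congr rfl
            intro k _
            rw [smul_smul]
            congr 1
            rw [show ((k:ℕ):ℤ)+1 = 1 + ((k:ℕ):ℤ) by ring, fourier_add]
            ring
        _ = (fourier 1 t * rsP K t) • v := by
            rw [← Finset.sum_smul]
            congr 1
            rw [rsP, Finset.mul_sum, ← hNdef, ← hc]
            exact Fin.sum_univ_eq_sum_range
              (fun m => (fourier 1) t * (c m * (fourier (m:ℤ)) t)) N
    have hFc : Continuous F := by
      apply continuous_finset_sum
      intro k _
      exact (fourier _).continuous.smul continuous_const
    have hFnorm : ∀ t, ‖F t‖ = ‖rsP K t‖ * b := by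
      intro t
      rw [hFeq t, norm_smul, norm_mul, norm_fourier1, one_mul]
    -- pointwise bound
    have hBpt : ∀ t, ‖F t‖ ≤ Real.sqrt (2 * 2^K) * b := by
      intro t
      rw [hFnorm t]
      apply mul_le_mul_of_nonneg_right _ hb.le
      have h1 : ‖rsP K t‖^2 ≤ 2 * 2^K := by
        have hfl := rs_flat K t
        rw [show (2:ℝ)^(K+1) = 2*2^K by ring] at hfl
        have h2 : (0:ℝ) ≤ ‖rsQ K t‖^2 := sq_nonneg _
        linarith
      calc ‖rsP K t‖ = Real.sqrt (‖rsP K t‖^2) := (Real.sqrt_sq (norm_nonneg _)).symm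
        _ ≤ Real.sqrt (2*2^K) := Real.sqrt_le_sqrt h1
    set B := Real.sqrt (2 * 2^K) * b with hBdef
    have hB0 : 0 < B := by
      apply mul_pos _ hb
      apply Real.sqrt_pos.mpr
      positivity
    set Ip := ∫ t, ‖F t‖ ^ p ∂μ1 with hIp
    have hIp0 : 0 ≤ Ip := integral_nonneg fun t => Real.rpow_nonneg (norm_nonneg _) _
    have hcr : ∫ t, ‖F t‖ ^ (2:ℝ) ∂μ1 ≤ B^(2-p) * Ip := crude_integral hFc hBpt hp1 hp2
    have hI2 : ∫ t, ‖F t‖ ^ (2:ℝ) ∂μ1 = (2:ℝ)^(K:ℕ) * b^(2:ℕ) := by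
      have hptw : ∀ t, ‖F t‖ ^ (2:ℝ) = ‖rsP K t‖^(2:ℕ) * b^(2:ℕ) := by
        intro t
        rw [hFnorm t, show ((2:ℝ)) = ((2:ℕ):ℝ) from by norm_num, Real.rpow_natCast, mul_pow]
      simp_rw [hptw]
      rw [integral_mul_const, parseval_rsP K]
    have hupper : Ip ^ ((1:ℝ)/p) ≤ U * ((2:ℝ)^(K:ℕ))^((1:ℝ)/q) * b := by
      have h := hU N (fun k => c (k:ℕ) • v)
      beta_reduce at h
      rw [← hFdef, tpNorm_eq_integral hFc p hp1, ← hIp] at h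
      have hsum : (∑ k : Fin N, ‖c (k:ℕ) • v‖ ^ q) = (N:ℝ) * b^q := by
        have : ∀ k : Fin N, ‖c (k:ℕ) • v‖ ^ q = b^q := by
          intro k
          rw [norm_smul, (rs_norm K _).1, one_mul]
        rw [Finset.sum_congr rfl (fun k _ => this k), Finset.sum_const, Finset.card_univ,
          Fintype.card_fin, nsmul_eq_mul]
      rw [hsum] at h
      have hrw : ((N:ℝ) * b^q) ^ ((1:ℝ)/q) = ((2:ℝ)^(K:ℕ))^((1:ℝ)/q) * b := by
        rw [Real.mul_rpow (by positivity) (by positivity), ← Real.rpow_mul hb.le,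
          mul_one_div_cancel hq0.ne', Real.rpow_one, hNR]
      rw [mul_assoc]
      rwa [hrw] at h
    -- from the upper bound on the L^p norm, bound Ip
    have hIpR : Ip ≤ (U * ((2:ℝ)^(K:ℕ))^((1:ℝ)/q) * b)^p := by
      have h1 := Real.rpow_le_rpow (Real.rpow_nonneg hIp0 _) hupper hp0.le
      rwa [← Real.rpow_mul hIp0, one_div_mul_cancel hp0.ne', Real.rpow_one] at h1
    rw [← hI2]
    exact le_trans hcr (mul_le_mul_of_nonneg_left hIpR (Real.rpow_nonneg hB0.le _))
  -- choose K large and contradict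
  set e := p * ((1:ℝ)/2 - 1/q) with hedef
  have he0 : 0 < e := by
    apply mul_pos hp0
    have : 1/q < 1/2 := one_div_lt_one_div_of_lt two_pos hq2
    linarith
  set β := (2:ℝ) ^ e with hβdef
  have hβ1 : 1 < β := by
    rw [hβdef]
    exact (Real.one_lt_rpow_iff_of_pos two_pos).mpr (Or.inl ⟨one_lt_two, he0⟩)
  obtain ⟨K, hK⟩ := pow_unbounded_of_one_lt (2 * U^p) hβ1
  have hkey := key K
  set NR := (2:ℝ)^(K:ℕ) with hNRdef
  have hNRpos : 0 < NR := by positivity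
  -- rewrite the RHS of hkey
  have E1 : (Real.sqrt (2*NR) * b)^(2-p) =
      (2:ℝ)^((2-p)/2) * NR^((2-p)/2) * b^(2-p) := by
    rw [Real.sqrt_eq_rpow, Real.mul_rpow (by positivity) hb.le,
      ← Real.rpow_mul (by positivity),
      Real.mul_rpow (by norm_num) hNRpos.le,
      show (1:ℝ)/2 * (2-p) = (2-p)/2 by ring]
  have E2 : (U * NR^((1:ℝ)/q) * b)^p = U^p * NR^(p/q) * b^p := by
    rw [Real.mul_rpow (by positivity) hb.le, Real.mul_rpow hU0 (by positivity),
      ← Real.rpow_mul hNRpos.le, show (1:ℝ)/q * p = p/q by ring]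
  rw [E1, E2] at hkey
  -- hkey : NR * b^2 ≤ 2^((2-p)/2) * NR^((2-p)/2) * b^(2-p) * (U^p * NR^(p/q) * b^p)
  have hb2 : b^(2:ℕ) = b^(2-p) * b^p := by
    rw [← Real.rpow_add hb, show (2:ℝ) - p + p = 2 by ring,
      show ((2:ℝ)) = ((2:ℕ):ℝ) from by norm_num, Real.rpow_natCast]
  have hNRr : NR^((2-p)/2) * NR^(p/q) = NR^((2-p)/2 + p/q) := (Real.rpow_add hNRpos _ _).symm
  have hkey2 : NR * (b^(2-p) * b^p) ≤
      ((2:ℝ)^((2-p)/2) * U^p * NR^((2-p)/2 + p/q)) * (b^(2-p) * b^p) := by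
    calc NR * (b^(2-p) * b^p) = NR * b^(2:ℕ) := by rw [hb2]
      _ ≤ 2^((2-p)/2) * NR^((2-p)/2) * b^(2-p) * (U^p * NR^(p/q) * b^p) := hkey
      _ = ((2:ℝ)^((2-p)/2) * U^p * (NR^((2-p)/2) * NR^(p/q))) * (b^(2-p) * b^p) := by ring
      _ = ((2:ℝ)^((2-p)/2) * U^p * NR^((2-p)/2 + p/q)) * (b^(2-p) * b^p) := by rw [hNRr]
  have hbp : 0 < b^(2-p) * b^p := by positivity
  have hkey3 : NR ≤ (2:ℝ)^((2-p)/2) * U^p * NR^((2-p)/2 + p/q) :=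
    le_of_mul_le_mul_right (by linarith [hkey2]) hbp
  have hkey4 : NR ^ e ≤ (2:ℝ)^((2-p)/2) * U^p := by
    have h1 : NR / NR^((2-p)/2 + p/q) ≤ (2:ℝ)^((2-p)/2) * U^p := by
      rw [div_le_iff₀ (by positivity)]
      exact hkey3
    have hdiv : NR^e = NR / NR^((2-p)/2 + p/q) := by
      rw [show e = 1 - ((2-p)/2 + p/q) from by rw [hedef]; ring,
        Real.rpow_sub hNRpos, Real.rpow_one]
    rwa [← hdiv] at h1
  have hfin : β^K ≤ 2 * U^p := by
    have h2 : NR ^ e = β^K := by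
      rw [hNRdef, hβdef, ← Real.rpow_natCast (2:ℝ) K, ← Real.rpow_mul (by norm_num),
        mul_comm (K:ℝ) e, Real.rpow_mul (by norm_num), Real.rpow_natCast]
    have h3 : (2:ℝ)^((2-p)/2) ≤ 2 := by
      calc (2:ℝ)^((2-p)/2) ≤ (2:ℝ)^(1:ℝ) :=
            Real.rpow_le_rpow_of_exponent_le one_le_two (by linarith)
        _ = 2 := Real.rpow_one 2
    calc β^K = NR^e := h2.symm
      _ ≤ (2:ℝ)^((2-p)/2) * U^p := hkey4
      _ ≤ 2 * U^p := mul_le_mul_of_nonneg_right h3 (Real.rpow_nonneg hU0 _)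
  exact absurd hfin (not_le.mpr hK)


-- power mean
lemma power_mean {n : ℕ} (hn : 0 < n) (a : Fin n → ℝ) (ha : ∀ k, 0 ≤ a k)
    {q : ℝ} (hq1 : 1 ≤ q) (hq2 : q ≤ 2) :
    (∑ k, a k ^ q) ^ (1/q) ≤ (n:ℝ) ^ (1/q - 1/2) * (∑ k, a k ^ (2:ℝ)) ^ (1/(2:ℝ)) := by
  have hq0 : (0:ℝ) < q := by linarith
  have hnR : (0:ℝ) < (n:ℝ) := by exact_mod_cast hn
  have key := Real.rpow_arith_mean_le_arith_mean_rpow (Finset.univ : Finset (Fin n))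
    (fun _ => 1/(n:ℝ)) (fun k => a k ^ q) (fun i _ => by positivity)
    (by simp [Finset.sum_const]; field_simp) (fun i _ => Real.rpow_nonneg (ha i) q)
    (p := 2/q) (by rw [le_div_iff₀ hq0]; linarith)
  have hz : ∀ i, (a i ^ q) ^ (2/q) = a i ^ (2:ℝ) := by
    intro i
    rw [← Real.rpow_mul (ha i)]
    congr 1
    field_simp
  simp_rw [hz] at key
  rw [← Finset.mul_sum, ← Finset.mul_sum] at key
  -- key : (1/n * A) ^ (2/q) ≤ 1/n * B
  set A := ∑ k, a k ^ q with hA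
  set B := ∑ k, a k ^ (2:ℝ) with hB
  have hA0 : 0 ≤ A := Finset.sum_nonneg fun i _ => Real.rpow_nonneg (ha i) q
  have hB0 : 0 ≤ B := Finset.sum_nonneg fun i _ => Real.rpow_nonneg (ha i) 2
  have step : (1/(n:ℝ) * A) ^ (1/q) ≤ (1/(n:ℝ) * B) ^ (1/(2:ℝ)) := by
    have h1 : ((1/(n:ℝ) * A) ^ (2/q)) ^ (1/(2:ℝ)) ≤ (1/(n:ℝ) * B) ^ (1/(2:ℝ)) :=
      Real.rpow_le_rpow (Real.rpow_nonneg (by positivity) _) key (by norm_num)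
    rwa [← Real.rpow_mul (by positivity),
      (by field_simp : (2/q) * (1/(2:ℝ)) = 1/q)] at h1
  calc A ^ (1/q) = (n:ℝ) ^ (1/q) * (1/(n:ℝ) * A) ^ (1/q) := by
        rw [← Real.mul_rpow hnR.le (by positivity)]
        congr 1
        field_simp
    _ ≤ (n:ℝ) ^ (1/q) * (1/(n:ℝ) * B) ^ (1/(2:ℝ)) := by
        gcongr
    _ = (n:ℝ) ^ (1/q - 1/2) * B ^ (1/(2:ℝ)) := by
        rw [Real.mul_rpow (by positivity) hB0, ← mul_assoc]
        congr 1
        rw [one_div ((n:ℝ)), ← Real.rpow_neg_one ((n:ℝ)), ← Real.rpow_mul hnR.le,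
          ← Real.rpow_add hnR]
        congr 1
        rw [sub_eq_add_neg]
        norm_num


/-- Interpolation of a discrete Hausdorff–Young type estimate with the trivial `ℓ¹-L^∞`
bound: if `‖Σ e_k x_k‖_{L^p} ≤ U (Σ‖x_k‖^q)^{1/q}` for `p ∈ [1,2]`, then with
`1/s = 1 - p/(2q')` one has
`‖Σ e_k x_k‖_{L²} ≤ U^{p/2} n^{1/s - 1/2} (Σ‖x_k‖²)^{1/2}`. -/
theorem interpolated_fourier_bound
    {X : Type*} [NormedAddCommGroup X] [NormedSpace ℂ X]
    (p q q' s : ℝ) (hp1 : 1 ≤ p) (hp2 : p ≤ 2) (hq : 1 ≤ q)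
    (hq' : 1/q + 1/q' = 1) (hs : 1/s = 1 - p/(2*q'))
    (U : ℝ) (hU0 : 0 ≤ U)
    (hU : ∀ (n : ℕ) (x : Fin n → X),
      tpNorm (ENNReal.ofReal p) (fun t => ∑ k : Fin n, (fourier (((k : ℕ) : ℤ) + 1) t) • x k) ≤
        U * (∑ k, ‖x k‖ ^ q) ^ (1/q)) :
    ∀ (n : ℕ) (x : Fin n → X),
      tpNorm 2 (fun t => ∑ k : Fin n, (fourier (((k : ℕ) : ℤ) + 1) t) • x k) ≤
        U ^ (p/2) * (n : ℝ) ^ (1/s - 1/2) * (∑ k, ‖x k‖ ^ 2) ^ (1/2 : ℝ) := by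
  intro n x
  set F : AddCircle (1:ℝ) → X := fun t => ∑ k : Fin n, (fourier (((k : ℕ) : ℤ) + 1) t) • x k
    with hF
  have hFc : Continuous F := by
    apply continuous_finset_sum
    intro k _
    exact (fourier _).continuous.smul continuous_const
  have hq0 : (0:ℝ) < q := by linarith
  have hp0 : (0:ℝ) < p := by linarith
  -- trivial case : all x k = 0
  by_cases hx0 : ∀ k, x k = 0
  · have hF0 : F = fun _ => (0 : X) := by
      funext t; simp [hF, hx0]
    have : tpNorm 2 F = 0 := by rw [hF0]; simp [tpNorm, eLpNorm_zero']
    rw [this]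
    positivity
  -- now some x k ≠ 0
  push_neg at hx0
  obtain ⟨k0, hk0⟩ := hx0
  have hn : 0 < n := Nat.pos_of_ne_zero (by rintro rfl; exact absurd k0.2 (by simp))
  have hnR : (0:ℝ) < (n:ℝ) := by exact_mod_cast hn
  set S2 : ℝ := ∑ k, ‖x k‖ ^ (2:ℝ) with hS2def
  have hS2pos : 0 < S2 := by
    apply Finset.sum_pos' (fun i _ => Real.rpow_nonneg (norm_nonneg _) _)
    exact ⟨k0, Finset.mem_univ _, Real.rpow_pos_of_pos (norm_pos_iff.mpr hk0) _⟩
  have hgoalS2 : (∑ k, ‖x k‖ ^ 2) = S2 := by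
    rw [hS2def]
    congr 1; ext k
    rw [show ((2:ℝ)) = ((2:ℕ):ℝ) by norm_num, Real.rpow_natCast]
  rw [hgoalS2]
  set S2h : ℝ := S2 ^ (1/(2:ℝ)) with hS2h
  have hS2h0 : 0 < S2h := Real.rpow_pos_of_pos hS2pos _
  set M : ℝ := ∑ k, ‖x k‖ with hMdef
  have hM0 : 0 ≤ M := Finset.sum_nonneg fun i _ => norm_nonneg _
  have hMpt : ∀ t, ‖F t‖ ≤ M := by
    intro t
    refine le_trans (norm_sum_le _ _) (le_of_eq ?_)
    congr 1; ext k
    rw [norm_smul, norm_fourier1, one_mul]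
  set Sq : ℝ := ∑ k, ‖x k‖ ^ q with hSqdef
  have hSq0 : 0 ≤ Sq := Finset.sum_nonneg fun i _ => Real.rpow_nonneg (norm_nonneg _) _
  have hE : 1/s - 1/2 = (1/2)*(1-p/2) + (1/q - 1/2)*(p/2) := by
    have h1 : 1/q' = 1 - 1/q := by linarith
    have h2 : p/(2*q') = (p/2) * (1/q') := by
      rw [div_eq_mul_inv, mul_inv, ← mul_assoc, one_div, div_eq_mul_inv]
    rw [hs, h2, h1]
    ring
  by_cases hq2 : q ≤ 2
  · -- main case
    set Ip : ℝ := ∫ t, ‖F t‖ ^ p ∂μ1 with hIp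
    set I2 : ℝ := ∫ t, ‖F t‖ ^ (2:ℝ) ∂μ1 with hI2
    have hIp0 : 0 ≤ Ip := integral_nonneg fun t => Real.rpow_nonneg (norm_nonneg _) _
    have hI20 : 0 ≤ I2 := integral_nonneg fun t => Real.rpow_nonneg (norm_nonneg _) _
    have hcr : I2 ≤ M ^ (2 - p) * Ip := crude_integral hFc hMpt hp1 hp2
    have hTp : Ip ^ (1/p) ≤ U * Sq ^ (1/q) := by
      have := hU n x
      rwa [tpNorm_eq_integral hFc p hp1] at this
    have hM2 : M ≤ (n:ℝ) ^ ((1:ℝ)/1 - 1/2) * S2h := by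
      have h := power_mean hn (fun k => ‖x k‖) (fun k => norm_nonneg _) le_rfl one_le_two
      have e1 : (∑ k, ‖x k‖ ^ (1:ℝ)) ^ (1/(1:ℝ)) = M := by
        simp [Real.rpow_one, hMdef]
      rw [← e1]
      exact h
    have hSq2 : Sq ^ (1/q) ≤ (n:ℝ) ^ (1/q - 1/2) * S2h :=
      power_mean hn (fun k => ‖x k‖) (fun k => norm_nonneg _) hq hq2
    have step1 : tpNorm 2 F ≤ M ^ (1 - p/2) * (Ip ^ (1/p)) ^ (p/2) := by
      rw [tpNorm_two_eq hFc, ← hI2]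
      calc I2 ^ (1/(2:ℝ)) ≤ (M ^ (2-p) * Ip) ^ (1/(2:ℝ)) :=
            Real.rpow_le_rpow hI20 hcr (by norm_num)
        _ = M ^ (1 - p/2) * (Ip ^ (1/p)) ^ (p/2) := by
            rw [Real.mul_rpow (Real.rpow_nonneg hM0 _) hIp0, ← Real.rpow_mul hM0,
              ← Real.rpow_mul hIp0,
              show (2-p)*(1/(2:ℝ)) = 1 - p/2 by ring,
              show (1:ℝ)/p * (p/2) = 1/(2:ℝ) by
                rw [div_mul_div_comm, one_mul, div_eq_div_iff (by positivity) (by norm_num)]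
                ring]
    have step2 : M ^ (1 - p/2) * (Ip ^ (1/p)) ^ (p/2) ≤
        M ^ (1 - p/2) * (U * Sq ^ (1/q)) ^ (p/2) := by
      apply mul_le_mul_of_nonneg_left _ (Real.rpow_nonneg hM0 _)
      exact Real.rpow_le_rpow (Real.rpow_nonneg hIp0 _) hTp (by positivity)
    have step3 : M ^ (1 - p/2) * (U * Sq ^ (1/q)) ^ (p/2) ≤
        U ^ (p/2) * (n:ℝ) ^ (1/s - 1/2) * S2h := by
      rw [Real.mul_rpow hU0 (Real.rpow_nonneg hSq0 _)]
      have hbig : M ^ (1 - p/2) * (Sq ^ (1/q)) ^ (p/2) ≤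
          ((n:ℝ) ^ ((1:ℝ)/1 - 1/2) * S2h) ^ (1 - p/2) *
            ((n:ℝ) ^ (1/q - 1/2) * S2h) ^ (p/2) := by
        apply mul_le_mul
        · exact Real.rpow_le_rpow hM0 hM2 (by linarith)
        · exact Real.rpow_le_rpow (Real.rpow_nonneg hSq0 _) hSq2 (by positivity)
        · exact Real.rpow_nonneg (Real.rpow_nonneg hSq0 _) _
        · positivity
      have hexp : ((n:ℝ) ^ ((1:ℝ)/1 - 1/2) * S2h) ^ (1 - p/2) *
            ((n:ℝ) ^ (1/q - 1/2) * S2h) ^ (p/2) = (n:ℝ) ^ (1/s - 1/2) * S2h := by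
        rw [Real.mul_rpow (by positivity) hS2h0.le, Real.mul_rpow (by positivity) hS2h0.le,
          ← Real.rpow_mul hnR.le, ← Real.rpow_mul hnR.le]
        calc (n:ℝ) ^ (((1:ℝ)/1 - 1/2) * (1 - p/2)) * S2h ^ (1 - p/2) *
              ((n:ℝ) ^ ((1/q - 1/2) * (p/2)) * S2h ^ (p/2))
            = (n:ℝ) ^ (((1:ℝ)/1 - 1/2) * (1 - p/2) + (1/q - 1/2) * (p/2)) *
              S2h ^ ((1 - p/2) + (p/2)) := by
              rw [Real.rpow_add hnR, Real.rpow_add hS2h0]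
              ring
          _ = (n:ℝ) ^ (1/s - 1/2) * S2h := by
              rw [hE]
              congr 1
              · congr 1
                norm_num
              · rw [show (1:ℝ) - p/2 + p/2 = 1 by ring, Real.rpow_one]
      calc M ^ (1 - p/2) * (U ^ (p/2) * (Sq ^ (1/q)) ^ (p/2))
          = U ^ (p/2) * (M ^ (1 - p/2) * (Sq ^ (1/q)) ^ (p/2)) := by ring
        _ ≤ U ^ (p/2) * ((n:ℝ) ^ (1/s - 1/2) * S2h) := by
            apply mul_le_mul_of_nonneg_left _ (Real.rpow_nonneg hU0 _)
            rw [← hexp]; exact hbig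
        _ = U ^ (p/2) * (n:ℝ) ^ (1/s - 1/2) * S2h := by ring
    exact le_trans step1 (le_trans step2 step3)
  · push_neg at hq2
    exact absurd (rs_contra p q hp1 hp2 hq2 U hU0 hk0 hU) id
end
end
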